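/- arXiv:1808.04172 — 6 statements merged into one kernel-verified Lean document; each statement's English description precedes it below -/
import Mathlib

section
/- Let G be a combinatorial Gauss diagram and let G' be obtained from G by an adjacent endpoint swap involving two distinct chords c and d. Then c is odd in G' if and only if c is even in G, d is odd in G' if and only if d is even in G, and every chord other than c and d is odd in G' if and only if it is odd in G. -/
open scoped Classical

/-- The cyclically next position on a circle of `m` marked points. -/
def nextPos {m : ℕ} (p : Fin m) : Fin m :=
  ⟨(p.val + 1) % m, Nat.mod_lt _ p.pos⟩

/-- `Inside a b x` : the point `x` lies strictly inside the cyclic interval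
running from `a` (forward) to `b`. -/
def Inside {m : ℕ} (a b x : Fin m) : Prop :=
  0 < (x - a).val ∧ (x - a).val < (b - a).val

/-- A combinatorial Gauss diagram with `n` chords: a bijection assigning to each
chord its two endpoints among `2 * n` cyclically ordered points, together with a
sign function taking values in `{-1, 1}`. -/
structure GaussDiagram (n : ℕ) where
  endpoint : Fin n × Bool ≃ Fin (2 * n)
  sign : Fin n → ℤ
  sign_pm : ∀ c, sign c = 1 ∨ sign c = -1

/-- Two chords are interlinked if exactly one endpoint of `d` lies strictly inside
the cyclic interval from `endpoint (c, false)` to `endpoint (c, true)`. -/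
def Interlinked {n : ℕ} (G : GaussDiagram n) (c d : Fin n) : Prop :=
  Xor'
    (Inside (G.endpoint (c, false)) (G.endpoint (c, true)) (G.endpoint (d, false)))
    (Inside (G.endpoint (c, false)) (G.endpoint (c, true)) (G.endpoint (d, true)))

/-- A chord is odd if it is interlinked with an odd number of other chords. -/
def OddChord {n : ℕ} (G : GaussDiagram n) (c : Fin n) : Prop :=
  Odd ((Finset.univ.filter fun d => d ≠ c ∧ Interlinked G c d).card)

/-- The odd writhe: the sum of the signs of the odd chords. -/
noncomputable def oddWrithe {n : ℕ} (G : GaussDiagram n) : ℤ :=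
  ∑ c ∈ Finset.univ.filter (fun c => OddChord G c), G.sign c

/-- `AdjSwap G G' p c d` : `G'` is obtained from `G` by the adjacent endpoint swap at
the cyclically adjacent positions `p`, `p+1`, which are occupied by endpoints of the
two distinct chords `c` and `d`; all signs are unchanged. -/
def AdjSwap {n : ℕ} (G G' : GaussDiagram n) (p : Fin (2 * n)) (c d : Fin n) : Prop :=
  c ≠ d ∧ (G.endpoint.symm p).1 = c ∧ (G.endpoint.symm (nextPos p)).1 = d ∧
    G'.endpoint = G.endpoint.trans (Equiv.swap p (nextPos p)) ∧
    G'.sign = G.sign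

/-- `ArcShift G G' p c d` : `G'` is obtained from `G` by the arc-shift move at the
cyclically adjacent positions `p`, `p+1`, occupied by endpoints of the two distinct
chords `c` and `d`: the two endpoints are exchanged and the signs of `c` and `d`
are negated. -/
def ArcShift {n : ℕ} (G G' : GaussDiagram n) (p : Fin (2 * n)) (c d : Fin n) : Prop :=
  c ≠ d ∧ (G.endpoint.symm p).1 = c ∧ (G.endpoint.symm (nextPos p)).1 = d ∧
    G'.endpoint = G.endpoint.trans (Equiv.swap p (nextPos p)) ∧
    G'.sign = fun e => if e = c ∨ e = d then -G.sign e else G.sign e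

/-- `SignFlip G G' c` : `G'` is obtained from `G` by negating the sign of the chord `c`,
changing nothing else. -/
def SignFlip {n : ℕ} (G G' : GaussDiagram n) (c : Fin n) : Prop :=
  G'.endpoint = G.endpoint ∧ G'.sign = Function.update G.sign c (-G.sign c)

/-- An arc-shift move between Gauss diagrams (at some position, on some pair of chords). -/
def ArcShiftMove {n : ℕ} (G G' : GaussDiagram n) : Prop :=
  ∃ p c d, ArcShift G G' p c d

/-- A sign-flip move between Gauss diagrams (at some chord). -/
def SignFlipMove {n : ℕ} (G G' : GaussDiagram n) : Prop :=
  ∃ c, SignFlip G G' c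

/-- A move is either an arc-shift move or a sign-flip move. -/
def Move {n : ℕ} (G G' : GaussDiagram n) : Prop :=
  ArcShiftMove G G' ∨ SignFlipMove G G'

/-- A Gauss diagram is parallel if no two of its chords are interlinked. -/
def Parallel {n : ℕ} (G : GaussDiagram n) : Prop :=
  ∀ c d : Fin n, c ≠ d → ¬ Interlinked G c d

/-! ### Auxiliary lemmas for `adjSwap_parity` -/

lemma gd_sub_val {m : ℕ} (a x : Fin m) :
    (x - a).val = if a.val ≤ x.val then x.val - a.val else x.val + m - a.val := by
  rw [Fin.sub_def]
  have ha := a.isLt; have hx := x.isLt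
  split_ifs with h
  · have e : m - a.val + x.val = (x.val - a.val) + m := by omega
    simp only [e, Nat.add_mod_right]
    exact Nat.mod_eq_of_lt (by omega)
  · have e : m - a.val + x.val = x.val + m - a.val := by omega
    rw [e]; exact Nat.mod_eq_of_lt (by omega)

lemma gd_inside_iff_val {m : ℕ} (a b x : Fin m) :
    Inside a b x ↔
      (0 < (if a.val ≤ x.val then x.val - a.val else x.val + m - a.val) ∧
        (if a.val ≤ x.val then x.val - a.val else x.val + m - a.val) <
          (if a.val ≤ b.val then b.val - a.val else b.val + m - a.val)) := by
  unfold Inside; rw [gd_sub_val, gd_sub_val]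

lemma gd_nextPos_val {m : ℕ} (p : Fin m) :
    (p.val + 1 = m ∧ (nextPos p).val = 0) ∨ ((nextPos p).val = p.val + 1 ∧ p.val + 1 < m) := by
  have hp := p.isLt
  rcases Nat.lt_or_ge (p.val + 1) m with h | h
  · right; exact ⟨Nat.mod_eq_of_lt h, h⟩
  · left
    have e : p.val + 1 = m := by omega
    refine ⟨e, ?_⟩
    show (p.val + 1) % m = 0
    rw [e, Nat.mod_self]

section gdMoves
variable {m : ℕ} {p q a b x u v : Fin m}

lemma gd_inside_not (hab : a ≠ b) (hax : a ≠ x) (hbx : b ≠ x) :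
    Inside b a x ↔ ¬ Inside a b x := by
  have ha := a.isLt; have hb := b.isLt; have hx := x.isLt
  rw [gd_inside_iff_val, gd_inside_iff_val]
  rw [Ne, Fin.ext_iff] at hab hax hbx
  split_ifs <;> omega

lemma gd_inside_pq (hq : q = nextPos p) (hpu : p ≠ b) (hqu : q ≠ b) : Inside p b q := by
  have ha := p.isLt; have hb := b.isLt
  have hv := gd_nextPos_val p; rw [← hq] at hv
  rw [gd_inside_iff_val]
  rw [Ne, Fin.ext_iff] at hpu hqu
  split_ifs <;> omega

lemma gd_inside_qp (hq : q = nextPos p) (hpu : p ≠ b) (hqu : q ≠ b) (hpq : p ≠ q) :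
    ¬ Inside q b p := by
  have ha := p.isLt; have hb := b.isLt
  have hv := gd_nextPos_val p; rw [← hq] at hv
  rw [gd_inside_iff_val]
  rw [Ne, Fin.ext_iff] at hpu hqu hpq
  split_ifs <;> omega

lemma gd_move_a (hq : q = nextPos p) (hbp : b ≠ p) (hbq : b ≠ q) (hxp : x ≠ p) (hxq : x ≠ q) :
    Inside q b x ↔ Inside p b x := by
  have hb := b.isLt; have hx := x.isLt; have hp := p.isLt
  have hv := gd_nextPos_val p; rw [← hq] at hv
  rw [gd_inside_iff_val, gd_inside_iff_val]
  rw [Ne, Fin.ext_iff] at hbp hbq hxp hxq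
  split_ifs <;> omega

lemma gd_move_b (hq : q = nextPos p) (hap : a ≠ p) (haq : a ≠ q) (hxp : x ≠ p) (hxq : x ≠ q) :
    Inside a q x ↔ Inside a p x := by
  have ha := a.isLt; have hx := x.isLt; have hp := p.isLt
  have hv := gd_nextPos_val p; rw [← hq] at hv
  rw [gd_inside_iff_val, gd_inside_iff_val]
  rw [Ne, Fin.ext_iff] at hap haq hxp hxq
  split_ifs <;> omega

lemma gd_move_x (hq : q = nextPos p) (hap : a ≠ p) (haq : a ≠ q) (hbp : b ≠ p) (hbq : b ≠ q) :
    Inside a b q ↔ Inside a b p := by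
  have ha := a.isLt; have hb := b.isLt; have hp := p.isLt
  have hv := gd_nextPos_val p; rw [← hq] at hv
  rw [gd_inside_iff_val, gd_inside_iff_val]
  rw [Ne, Fin.ext_iff] at hap haq hbp hbq
  split_ifs <;> omega

lemma gd_inside_swap (hq : q = nextPos p)
    (h1 : ¬((a = p ∨ a = q) ∧ (b = p ∨ b = q)))
    (h2 : ¬((a = p ∨ a = q) ∧ (x = p ∨ x = q)))
    (h3 : ¬((b = p ∨ b = q) ∧ (x = p ∨ x = q))) :
    Inside (Equiv.swap p q a) (Equiv.swap p q b) (Equiv.swap p q x) ↔ Inside a b x := by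
  push_neg at h1 h2 h3
  rcases eq_or_ne a p with rfl | hap
  · have hb := h1 (Or.inl rfl); have hx := h2 (Or.inl rfl)
    rw [Equiv.swap_apply_left, Equiv.swap_apply_of_ne_of_ne hb.1 hb.2,
      Equiv.swap_apply_of_ne_of_ne hx.1 hx.2]
    exact gd_move_a hq hb.1 hb.2 hx.1 hx.2
  rcases eq_or_ne a q with rfl | haq
  · have hb := h1 (Or.inr rfl); have hx := h2 (Or.inr rfl)
    rw [Equiv.swap_apply_right, Equiv.swap_apply_of_ne_of_ne hb.1 hb.2,
      Equiv.swap_apply_of_ne_of_ne hx.1 hx.2]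
    exact (gd_move_a hq hb.1 hb.2 hx.1 hx.2).symm
  rw [Equiv.swap_apply_of_ne_of_ne hap haq]
  rcases eq_or_ne b p with rfl | hbp
  · have hx := h3 (Or.inl rfl)
    rw [Equiv.swap_apply_left, Equiv.swap_apply_of_ne_of_ne hx.1 hx.2]
    exact gd_move_b hq hap haq hx.1 hx.2
  rcases eq_or_ne b q with rfl | hbq
  · have hx := h3 (Or.inr rfl)
    rw [Equiv.swap_apply_right, Equiv.swap_apply_of_ne_of_ne hx.1 hx.2]
    exact (gd_move_b hq hap haq hx.1 hx.2).symm
  rw [Equiv.swap_apply_of_ne_of_ne hbp hbq]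
  rcases eq_or_ne x p with rfl | hxp
  · rw [Equiv.swap_apply_left]
    exact gd_move_x hq hap haq hbp hbq
  rcases eq_or_ne x q with rfl | hxq
  · rw [Equiv.swap_apply_right]
    exact (gd_move_x hq hap haq hbp hbq).symm
  rw [Equiv.swap_apply_of_ne_of_ne hxp hxq]

end gdMoves

lemma gd_odd_toggle {α : Type*} [Fintype α] (P P' : α → Prop)
    [DecidablePred P] [DecidablePred P'] (d : α)
    (hd : P' d ↔ ¬ P d) (h : ∀ f, f ≠ d → (P' f ↔ P f)) :
    (Odd (Finset.univ.filter P').card ↔ ¬ Odd (Finset.univ.filter P).card) := by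
  classical
  have he : (Finset.univ.filter P').erase d = (Finset.univ.filter P).erase d := by
    ext f
    simp only [Finset.mem_erase, Finset.mem_filter, Finset.mem_univ, true_and]
    constructor
    · rintro ⟨hf, hP⟩; exact ⟨hf, (h f hf).mp hP⟩
    · rintro ⟨hf, hP⟩; exact ⟨hf, (h f hf).mpr hP⟩
  by_cases hP : P d
  · have hd1 : d ∈ Finset.univ.filter P := Finset.mem_filter.mpr ⟨Finset.mem_univ _, hP⟩
    have hd2 : d ∉ Finset.univ.filter P' := by
      simp only [Finset.mem_filter, Finset.mem_univ, true_and]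
      exact fun hh => (hd.mp hh) hP
    have hcard : (Finset.univ.filter P') = (Finset.univ.filter P).erase d := by
      rw [← he, Finset.erase_eq_of_notMem hd2]
    have hpos : 0 < (Finset.univ.filter P).card := Finset.card_pos.mpr ⟨d, hd1⟩
    rw [hcard, Finset.card_erase_of_mem hd1, Nat.odd_iff, Nat.odd_iff]
    omega
  · have hd2 : d ∈ Finset.univ.filter P' :=
      Finset.mem_filter.mpr ⟨Finset.mem_univ _, hd.mpr hP⟩
    have hd1 : d ∉ Finset.univ.filter P := by
      simp only [Finset.mem_filter, Finset.mem_univ, true_and]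
      exact hP
    have hcard : (Finset.univ.filter P) = (Finset.univ.filter P').erase d := by
      rw [he, Finset.erase_eq_of_notMem hd1]
    have hpos : 0 < (Finset.univ.filter P').card := Finset.card_pos.mpr ⟨d, hd2⟩
    rw [hcard, Finset.card_erase_of_mem hd2, Nat.odd_iff, Nat.odd_iff]
    omega

/-- an adjacent endpoint swap involving the two distinct chords `c` and `d`
flips the parity of `c` and of `d` and preserves the parity of every other chord. -/
theorem adjSwap_parity {n : ℕ} (hn : 1 ≤ n) (G G' : GaussDiagram n)
    (p : Fin (2 * n)) (c d : Fin n) (h : AdjSwap G G' p c d) :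
    (OddChord G' c ↔ ¬ OddChord G c) ∧
      (OddChord G' d ↔ ¬ OddChord G d) ∧
      ∀ e : Fin n, e ≠ c → e ≠ d → (OddChord G' e ↔ OddChord G e) := by
  obtain ⟨hcd, hp1, hq1, hE, hsg⟩ := h
  obtain ⟨q, hq⟩ : ∃ q, q = nextPos p := ⟨_, rfl⟩
  rw [← hq] at hq1 hE
  have hinj := G.endpoint.injective
  obtain ⟨s, hEp⟩ : ∃ s : Bool, G.endpoint (c, s) = p :=
    ⟨_, by rw [← hp1, Prod.mk.eta, Equiv.apply_symm_apply]⟩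
  obtain ⟨t, hEq⟩ : ∃ t : Bool, G.endpoint (d, t) = q :=
    ⟨_, by rw [← hq1, Prod.mk.eta, Equiv.apply_symm_apply]⟩
  have hpq : p ≠ q := by
    intro hh
    have : (c, s) = (d, t) := hinj (by rw [hEp, hEq, hh])
    exact hcd (congrArg Prod.fst this)
  have hmem : ∀ z : Fin n × Bool, (G.endpoint z = p ∨ G.endpoint z = q) →
      (z = (c, s) ∨ z = (d, t)) := by
    intro z hz
    rcases hz with hz | hz
    · exact Or.inl (hinj (by rw [hz, hEp]))
    · exact Or.inr (hinj (by rw [hz, hEq]))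
  have hfst : ∀ z : Fin n × Bool, (G.endpoint z = p ∨ G.endpoint z = q) →
      (z.1 = c ∨ z.1 = d) := by
    intro z hz
    rcases hmem z hz with hh | hh
    · exact Or.inl (by rw [hh])
    · exact Or.inr (by rw [hh])
  have hnotboth : ∀ g : Fin n,
      ¬((G.endpoint (g, false) = p ∨ G.endpoint (g, false) = q) ∧
        (G.endpoint (g, true) = p ∨ G.endpoint (g, true) = q)) := by
    rintro g ⟨hA, hB⟩
    rcases hmem _ hA with hh | hh <;> rcases hmem _ hB with hh' | hh'
    · exact Bool.false_ne_true
        ((congrArg Prod.snd hh).trans (congrArg Prod.snd hh').symm)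
    · exact hcd ((congrArg Prod.fst hh).symm.trans (congrArg Prod.fst hh'))
    · exact hcd ((congrArg Prod.fst hh').symm.trans (congrArg Prod.fst hh))
    · exact Bool.false_ne_true
        ((congrArg Prod.snd hh).trans (congrArg Prod.snd hh').symm)
  have hE' : ∀ z, G'.endpoint z = Equiv.swap p q (G.endpoint z) := by
    intro z; rw [hE]; rfl
  -- invariance of interlinking for pairs other than {c, d}
  have inv : ∀ e f : Fin n, e ≠ f → ¬((e = c ∨ e = d) ∧ (f = c ∨ f = d)) →
      (Interlinked G' e f ↔ Interlinked G e f) := by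
    intro e f hef hno
    have key : ∀ i : Bool,
        (Inside (G'.endpoint (e, false)) (G'.endpoint (e, true)) (G'.endpoint (f, i)) ↔
          Inside (G.endpoint (e, false)) (G.endpoint (e, true)) (G.endpoint (f, i))) := by
      intro i
      rw [hE' (e, false), hE' (e, true), hE' (f, i)]
      refine gd_inside_swap hq (hnotboth e) ?_ ?_
      · rintro ⟨hA, hX⟩
        exact hno ⟨hfst (e, false) hA, hfst (f, i) hX⟩
      · rintro ⟨hB, hX⟩
        exact hno ⟨hfst (e, true) hB, hfst (f, i) hX⟩
    unfold Interlinked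
    rw [key false, key true]
  -- the other endpoints of c and d
  obtain ⟨u, hu⟩ : ∃ u, G.endpoint (c, !s) = u := ⟨_, rfl⟩
  obtain ⟨v, hv⟩ : ∃ v, G.endpoint (d, !t) = v := ⟨_, rfl⟩
  have hpu : p ≠ u := by
    rw [← hEp, ← hu]; intro hh
    have := congrArg Prod.snd (hinj hh)
    simp at this
  have hqu : q ≠ u := by
    rw [← hEq, ← hu]; intro hh
    exact hcd (congrArg Prod.fst (hinj hh)).symm
  have hpv : p ≠ v := by
    rw [← hEp, ← hv]; intro hh
    exact hcd (congrArg Prod.fst (hinj hh))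
  have hqv : q ≠ v := by
    rw [← hEq, ← hv]; intro hh
    have := congrArg Prod.snd (hinj hh)
    simp at this
  have huv : u ≠ v := by
    rw [← hu, ← hv]; intro hh
    exact hcd (congrArg Prod.fst (hinj hh))
  have hσp : Equiv.swap p q p = q := Equiv.swap_apply_left p q
  have hσq : Equiv.swap p q q = p := Equiv.swap_apply_right p q
  have hσu : Equiv.swap p q u = u := Equiv.swap_apply_of_ne_of_ne hpu.symm hqu.symm
  have hσv : Equiv.swap p q v = v := Equiv.swap_apply_of_ne_of_ne hpv.symm hqv.symm
  -- facts for the toggle at the pair (c, d)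
  have f1 : Inside p u q := gd_inside_pq hq hpu hqu
  have f2 : ¬ Inside q u p := gd_inside_qp hq hpu hqu hpq
  have f3 : Inside q u v ↔ Inside p u v := gd_move_a hq hpu.symm hqu.symm hpv.symm hqv.symm
  have g1 : Inside u p q ↔ ¬ Inside p u q := gd_inside_not hpu hpq hqu.symm
  have g2 : Inside u p v ↔ ¬ Inside p u v := gd_inside_not hpu hpv huv
  have g3 : Inside u q p ↔ ¬ Inside q u p := gd_inside_not hqu hpq.symm hpu.symm
  have g4 : Inside u q v ↔ ¬ Inside q u v := gd_inside_not hqu hqv huv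
  have f1' : Inside p v q := gd_inside_pq hq hpv hqv
  have f2' : ¬ Inside q v p := gd_inside_qp hq hpv hqv hpq
  have f3' : Inside q v u ↔ Inside p v u := gd_move_a hq hpv.symm hqv.symm hpu.symm hqu.symm
  have g1' : Inside v p q ↔ ¬ Inside p v q := gd_inside_not hpv hpq hqv.symm
  have g2' : Inside v p u ↔ ¬ Inside p v u := gd_inside_not hpv hpu huv.symm
  have g3' : Inside v q p ↔ ¬ Inside q v p := gd_inside_not hqv hpq.symm hpv.symm
  have g4' : Inside v q u ↔ ¬ Inside q v u := gd_inside_not hqv hqu huv.symm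
  have tog : Interlinked G' c d ↔ ¬ Interlinked G c d := by
    unfold Interlinked
    simp only [hE']
    cases s <;> cases t <;>
      simp only [Bool.not_false, Bool.not_true] at hu hv <;>
      rw [hEp, hEq, hu, hv, hσp, hσq, hσu, hσv] <;>
      simp only [Xor', g1, g2, g3, g4, f3, eq_iff_iff] <;>
      simp [f1, f2, xor_def]
  have togd : Interlinked G' d c ↔ ¬ Interlinked G d c := by
    unfold Interlinked
    simp only [hE']
    cases s <;> cases t <;>
      simp only [Bool.not_false, Bool.not_true] at hu hv <;>
      rw [hEp, hEq, hu, hv, hσp, hσq, hσu, hσv] <;>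
      simp only [Xor', g1', g2', g3', g4', f3', eq_iff_iff] <;>
      simp [f1', f2', xor_def]
  have hdc : d ≠ c := hcd.symm
  refine ⟨?_, ?_, ?_⟩
  · unfold OddChord
    refine gd_odd_toggle _ _ d ?_ ?_
    · constructor
      · rintro ⟨_, hI⟩ ⟨_, hI'⟩
        exact (tog.mp hI) hI'
      · intro hh
        exact ⟨hdc, tog.mpr (fun hI => hh ⟨hdc, hI⟩)⟩
    · intro f hfd
      by_cases hfc : f = c
      · subst hfc; simp
      · have := inv c f (Ne.symm hfc)
          (by rintro ⟨-, hf | hf⟩; exacts [hfc hf, hfd hf])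
        exact and_congr_right fun _ => this
  · unfold OddChord
    refine gd_odd_toggle _ _ c ?_ ?_
    · constructor
      · rintro ⟨_, hI⟩ ⟨_, hI'⟩
        exact (togd.mp hI) hI'
      · intro hh
        exact ⟨hcd, togd.mpr (fun hI => hh ⟨hcd, hI⟩)⟩
    · intro f hfc
      by_cases hfd : f = d
      · subst hfd; simp
      · have := inv d f (Ne.symm hfd)
          (by rintro ⟨-, hf | hf⟩; exacts [hfc hf, hfd hf])
        exact and_congr_right fun _ => this
  · intro e hec hed
    unfold OddChord
    have hset : (Finset.univ.filter fun f => f ≠ e ∧ Interlinked G' e f) =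
        (Finset.univ.filter fun f => f ≠ e ∧ Interlinked G e f) := by
      ext f
      simp only [Finset.mem_filter, Finset.mem_univ, true_and]
      by_cases hfe : f = e
      · simp [hfe]
      · have := inv e f (Ne.symm hfe)
          (by rintro ⟨he' | he', -⟩; exacts [hec he', hed he'])
        exact and_congr_right fun _ => this
    rw [hset]
end

section
/- Let G be a combinatorial Gauss diagram and let G' be obtained from G by an arc-shift move involving two distinct chords c and d whose signs in G are ε(c) and ε(d). Then J(G') = J(G) − (ε(c) + ε(d)). -/
open scoped Classical

section ArcShiftAux

lemma sub_val_eq {m : ℕ} (x a : Fin m) :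
    (x - a).val = if a.val ≤ x.val then x.val - a.val else x.val + m - a.val := by
  have hx := x.isLt; have ha := a.isLt
  rw [Fin.sub_def]
  simp only
  split_ifs with h
  · have hm : m - a.val + x.val = m + (x.val - a.val) := by omega
    rw [hm, Nat.add_mod_left, Nat.mod_eq_of_lt (by omega)]
  · rw [Nat.mod_eq_of_lt (by omega)]; omega

lemma inside_iff {m : ℕ} (a b x : Fin m) :
    Inside a b x ↔ ((a.val < x.val ∧ x.val < b.val) ∨
      (b.val < a.val ∧ (a.val < x.val ∨ x.val < b.val))) := by
  have hx := x.isLt; have ha := a.isLt; have hb := b.isLt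
  unfold Inside
  rw [sub_val_eq, sub_val_eq]
  split_ifs <;> omega

section Moves
variable {m : ℕ} {p q a b x y z : Fin m}
  (hq : q.val = p.val + 1 ∨ (p.val + 1 = m ∧ q.val = 0))

include hq

lemma move_x (h1 : a ≠ p) (h2 : a ≠ q) (h3 : b ≠ p) (h4 : b ≠ q) :
    Inside a b p ↔ Inside a b q := by
  have := p.isLt; have := q.isLt; have := a.isLt; have := b.isLt
  simp only [ne_eq, Fin.ext_iff] at h1 h2 h3 h4
  rw [inside_iff, inside_iff]; omega

lemma move_a (h1 : x ≠ p) (h2 : x ≠ q) (h3 : y ≠ p) (h4 : y ≠ q) (h5 : x ≠ y) :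
    Inside p y x ↔ Inside q y x := by
  have := p.isLt; have := q.isLt; have := x.isLt; have := y.isLt
  simp only [ne_eq, Fin.ext_iff] at h1 h2 h3 h4 h5
  rw [inside_iff, inside_iff]; omega

lemma move_b (h1 : x ≠ p) (h2 : x ≠ q) (h3 : y ≠ p) (h4 : y ≠ q) (h5 : x ≠ y) :
    Inside y p x ↔ Inside y q x := by
  have := p.isLt; have := q.isLt; have := x.isLt; have := y.isLt
  simp only [ne_eq, Fin.ext_iff] at h1 h2 h3 h4 h5
  rw [inside_iff, inside_iff]; omega

variable (h3 : y ≠ p) (h4 : y ≠ q) (h5 : z ≠ p) (h6 : z ≠ q) (h7 : y ≠ z)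
include h3 h4 h5 h6 h7

lemma toggle_a : Xor' (Inside q y p) (Inside q y z) ↔ ¬ Xor' (Inside p y q) (Inside p y z) := by
  have := p.isLt; have := q.isLt; have := y.isLt; have := z.isLt
  simp only [ne_eq, Fin.ext_iff] at h3 h4 h5 h6 h7
  simp only [Xor', Xor, inside_iff]; omega

lemma toggle_b : Xor' (Inside y q p) (Inside y q z) ↔ ¬ Xor' (Inside y p q) (Inside y p z) := by
  have := p.isLt; have := q.isLt; have := y.isLt; have := z.isLt
  simp only [ne_eq, Fin.ext_iff] at h3 h4 h5 h6 h7
  simp only [Xor', Xor, inside_iff]; omega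

lemma toggle_a' : Xor' (Inside p z q) (Inside p z y) ↔ ¬ Xor' (Inside q z p) (Inside q z y) := by
  have := p.isLt; have := q.isLt; have := y.isLt; have := z.isLt
  simp only [ne_eq, Fin.ext_iff] at h3 h4 h5 h6 h7
  simp only [Xor', Xor, inside_iff]; omega

lemma toggle_b' : Xor' (Inside z p q) (Inside z p y) ↔ ¬ Xor' (Inside z q p) (Inside z q y) := by
  have := p.isLt; have := q.isLt; have := y.isLt; have := z.isLt
  simp only [ne_eq, Fin.ext_iff] at h3 h4 h5 h6 h7
  simp only [Xor', Xor, inside_iff]; omega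

end Moves

lemma xor_congr' {a b a' b' : Prop} (h1 : a ↔ a') (h2 : b ↔ b') : Xor' a b ↔ Xor' a' b' := by
  unfold Xor' Xor; tauto

lemma xor_comm'' {a b : Prop} : Xor' a b ↔ Xor' b a := by
  unfold Xor'; exact or_comm

lemma parity_flip {α : Type*} [Fintype α] {P P' : α → Prop}
    [DecidablePred P] [DecidablePred P']
    (t : α) (ht : P' t ↔ ¬ P t) (hsame : ∀ f, f ≠ t → (P' f ↔ P f)) :
    Odd ((Finset.univ.filter P').card) ↔ ¬ Odd ((Finset.univ.filter P).card) := by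
  classical
  by_cases hmem : t ∈ Finset.univ.filter P
  · have hPt : P t := (Finset.mem_filter.mp hmem).2
    have hES' : Finset.univ.filter P' = (Finset.univ.filter P).erase t := by
      ext f
      simp only [Finset.mem_erase, Finset.mem_filter, Finset.mem_univ, true_and]
      by_cases hf : f = t
      · subst hf; simp [ht, hPt]
      · simp [hf, hsame f hf]
    rw [hES', Finset.card_erase_of_mem hmem, Nat.odd_iff, Nat.odd_iff]
    have : 1 ≤ (Finset.univ.filter P).card := Finset.card_pos.mpr ⟨t, hmem⟩
    omega
  · have hPt : ¬ P t := fun hh => hmem (Finset.mem_filter.mpr ⟨Finset.mem_univ t, hh⟩)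
    have hES' : Finset.univ.filter P' = insert t (Finset.univ.filter P) := by
      ext f
      simp only [Finset.mem_insert, Finset.mem_filter, Finset.mem_univ, true_and]
      by_cases hf : f = t
      · subst hf; simp [ht, hPt]
      · simp [hf, hsame f hf]
    rw [hES', Finset.card_insert_of_notMem hmem, Nat.odd_iff, Nat.odd_iff]
    omega

end ArcShiftAux

set_option maxHeartbeats 1000000

/-- an arc-shift move involving the two distinct chords `c` and `d` changes
the odd writhe by `-(ε(c) + ε(d))`. -/
theorem arcShift_oddWrithe {n : ℕ} (hn : 1 ≤ n) (G G' : GaussDiagram n)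
    (p : Fin (2 * n)) (c d : Fin n) (h : ArcShift G G' p c d) :
    oddWrithe G' = oddWrithe G - (G.sign c + G.sign d) := by
  obtain ⟨hcd, hc, hd, hE, hs⟩ := h
  obtain ⟨q, hqd⟩ : ∃ v, nextPos p = v := ⟨_, rfl⟩
  rw [hqd] at hd hE
  have hq : q.val = p.val + 1 ∨ (p.val + 1 = 2 * n ∧ q.val = 0) := by
    have hv : q.val = (p.val + 1) % (2 * n) := by rw [← hqd]; rfl
    have hplt := p.isLt
    rcases Nat.lt_or_ge (p.val + 1) (2 * n) with h' | h'
    · left; rw [hv, Nat.mod_eq_of_lt h']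
    · right
      have h2 : p.val + 1 = 2 * n := by omega
      exact ⟨h2, by rw [hv, h2, Nat.mod_self]⟩
  obtain ⟨b₀, hb₀⟩ : ∃ b, (G.endpoint.symm p).2 = b := ⟨_, rfl⟩
  obtain ⟨b₁, hb₁⟩ : ∃ b, (G.endpoint.symm q).2 = b := ⟨_, rfl⟩
  have hps : G.endpoint.symm p = (c, b₀) := Prod.ext hc hb₀
  have hqs : G.endpoint.symm q = (d, b₁) := Prod.ext hd hb₁
  have hp0 : G.endpoint (c, b₀) = p := by rw [← hps, Equiv.apply_symm_apply]
  have hq0 : G.endpoint (d, b₁) = q := by rw [← hqs, Equiv.apply_symm_apply]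
  obtain ⟨y, hy⟩ : ∃ v, G.endpoint (c, !b₀) = v := ⟨_, rfl⟩
  obtain ⟨z, hz⟩ : ∃ v, G.endpoint (d, !b₁) = v := ⟨_, rfl⟩
  have hneq : ∀ (e : Fin n) (be : Bool) (f : Fin n) (bf : Bool), e ≠ f →
      G.endpoint (e, be) ≠ G.endpoint (f, bf) := by
    intro e be f bf hef hh
    have h2 := G.endpoint.injective hh
    rw [Prod.mk.injEq] at h2
    exact hef h2.1
  have hneqb : ∀ (e : Fin n) (b : Bool), G.endpoint (e, !b) ≠ G.endpoint (e, b) := by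
    intro e b hh
    have h2 := G.endpoint.injective hh
    rw [Prod.mk.injEq] at h2
    simp at h2
  have hyp : y ≠ p := by rw [← hp0, ← hy]; exact hneqb c b₀
  have hyq : y ≠ q := by rw [← hq0, ← hy]; exact hneq c (!b₀) d b₁ hcd
  have hzp : z ≠ p := by rw [← hp0, ← hz]; exact hneq d (!b₁) c b₀ (Ne.symm hcd)
  have hzq : z ≠ q := by rw [← hq0, ← hz]; exact hneqb d b₁
  have hyz : y ≠ z := by rw [← hy, ← hz]; exact hneq c (!b₀) d (!b₁) hcd
  have hnp : ∀ (e : Fin n) (b : Bool), e ≠ c → G.endpoint (e, b) ≠ p := by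
    intro e b he; rw [← hp0]; exact hneq e b c b₀ he
  have hnq : ∀ (e : Fin n) (b : Bool), e ≠ d → G.endpoint (e, b) ≠ q := by
    intro e b he; rw [← hq0]; exact hneq e b d b₁ he
  have hny : ∀ (e : Fin n) (b : Bool), e ≠ c → G.endpoint (e, b) ≠ y := by
    intro e b he; rw [← hy]; exact hneq e b c (!b₀) he
  have hnz : ∀ (e : Fin n) (b : Bool), e ≠ d → G.endpoint (e, b) ≠ z := by
    intro e b he; rw [← hz]; exact hneq e b d (!b₁) he
  have hE' : ∀ eb : Fin n × Bool, G'.endpoint eb = Equiv.swap p q (G.endpoint eb) := by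
    intro eb; rw [hE]; rfl
  have ec0 : G'.endpoint (c, b₀) = q := by rw [hE', hp0, Equiv.swap_apply_left]
  have ec1 : G'.endpoint (c, !b₀) = y := by
    rw [hE', hy]; exact Equiv.swap_apply_of_ne_of_ne hyp hyq
  have ed0 : G'.endpoint (d, b₁) = p := by rw [hE', hq0, Equiv.swap_apply_right]
  have ed1 : G'.endpoint (d, !b₁) = z := by
    rw [hE', hz]; exact Equiv.swap_apply_of_ne_of_ne hzp hzq
  have eo : ∀ (e : Fin n) (b : Bool), e ≠ c → e ≠ d →
      G'.endpoint (e, b) = G.endpoint (e, b) := by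
    intro e b h1 h2
    rw [hE']
    exact Equiv.swap_apply_of_ne_of_ne (hnp e b h1) (hnq e b h2)
  -- untouched pairs
  have ILA : ∀ e f : Fin n, e ≠ c → e ≠ d → f ≠ c → f ≠ d →
      (Interlinked G' e f ↔ Interlinked G e f) := by
    intro e f h1 h2 h3 h4
    unfold Interlinked
    rw [eo e false h1 h2, eo e true h1 h2, eo f false h3 h4, eo f true h3 h4]
  -- second argument is c
  have ILB : ∀ e : Fin n, e ≠ c → e ≠ d → (Interlinked G' e c ↔ Interlinked G e c) := by
    intro e h1 h2
    have mv : Inside (G.endpoint (e, false)) (G.endpoint (e, true)) p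
        ↔ Inside (G.endpoint (e, false)) (G.endpoint (e, true)) q :=
      move_x hq (hnp e false h1) (hnq e false h2) (hnp e true h1) (hnq e true h2)
    unfold Interlinked
    rw [eo e false h1 h2, eo e true h1 h2]
    cases b₀
    · simp only [Bool.not_false] at ec0 ec1 hy
      rw [ec0, ec1, hp0, hy]
      exact xor_congr' mv.symm Iff.rfl
    · simp only [Bool.not_true] at ec0 ec1 hy
      rw [ec0, ec1, hp0, hy]
      exact xor_congr' Iff.rfl mv.symm
  -- second argument is d
  have ILB' : ∀ e : Fin n, e ≠ c → e ≠ d → (Interlinked G' e d ↔ Interlinked G e d) := by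
    intro e h1 h2
    have mv : Inside (G.endpoint (e, false)) (G.endpoint (e, true)) p
        ↔ Inside (G.endpoint (e, false)) (G.endpoint (e, true)) q :=
      move_x hq (hnp e false h1) (hnq e false h2) (hnp e true h1) (hnq e true h2)
    unfold Interlinked
    rw [eo e false h1 h2, eo e true h1 h2]
    cases b₁
    · simp only [Bool.not_false] at ed0 ed1 hz
      rw [ed0, ed1, hq0, hz]
      exact xor_congr' mv Iff.rfl
    · simp only [Bool.not_true] at ed0 ed1 hz
      rw [ed0, ed1, hq0, hz]
      exact xor_congr' Iff.rfl mv
  -- first argument is c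
  have ILC : ∀ f : Fin n, f ≠ c → f ≠ d → (Interlinked G' c f ↔ Interlinked G c f) := by
    intro f h1 h2
    have x0 := eo f false h1 h2
    have x1 := eo f true h1 h2
    unfold Interlinked
    rw [x0, x1]
    cases b₀
    · simp only [Bool.not_false] at ec0 ec1 hy
      rw [ec0, ec1, hp0, hy]
      exact xor_congr'
        (move_a hq (hnp f false h1) (hnq f false h2) hyp hyq (hny f false h1)).symm
        (move_a hq (hnp f true h1) (hnq f true h2) hyp hyq (hny f true h1)).symm
    · simp only [Bool.not_true] at ec0 ec1 hy
      rw [ec0, ec1, hp0, hy]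
      exact xor_congr'
        (move_b hq (hnp f false h1) (hnq f false h2) hyp hyq (hny f false h1)).symm
        (move_b hq (hnp f true h1) (hnq f true h2) hyp hyq (hny f true h1)).symm
  -- first argument is d
  have ILC' : ∀ f : Fin n, f ≠ c → f ≠ d → (Interlinked G' d f ↔ Interlinked G d f) := by
    intro f h1 h2
    have x0 := eo f false h1 h2
    have x1 := eo f true h1 h2
    unfold Interlinked
    rw [x0, x1]
    cases b₁
    · simp only [Bool.not_false] at ed0 ed1 hz
      rw [ed0, ed1, hq0, hz]
      exact xor_congr'
        (move_a hq (hnp f false h1) (hnq f false h2) hzp hzq (hnz f false h2))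
        (move_a hq (hnp f true h1) (hnq f true h2) hzp hzq (hnz f true h2))
    · simp only [Bool.not_true] at ed0 ed1 hz
      rw [ed0, ed1, hq0, hz]
      exact xor_congr'
        (move_b hq (hnp f false h1) (hnq f false h2) hzp hzq (hnz f false h2))
        (move_b hq (hnp f true h1) (hnq f true h2) hzp hzq (hnz f true h2))
  -- the pair c d toggles
  have ILD : Interlinked G' c d ↔ ¬ Interlinked G c d := by
    unfold Interlinked
    cases b₀
    · simp only [Bool.not_false] at ec0 ec1 hy
      rw [ec0, ec1, hp0, hy]
      have t := toggle_a hq hyp hyq hzp hzq hyz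
      cases b₁
      · simp only [Bool.not_false] at ed0 ed1 hz
        rw [ed0, ed1, hq0, hz]
        exact t
      · simp only [Bool.not_true] at ed0 ed1 hz
        rw [ed0, ed1, hq0, hz]
        exact xor_comm''.trans (t.trans (not_congr xor_comm''))
    · simp only [Bool.not_true] at ec0 ec1 hy
      rw [ec0, ec1, hp0, hy]
      have t := toggle_b hq hyp hyq hzp hzq hyz
      cases b₁
      · simp only [Bool.not_false] at ed0 ed1 hz
        rw [ed0, ed1, hq0, hz]
        exact t
      · simp only [Bool.not_true] at ed0 ed1 hz
        rw [ed0, ed1, hq0, hz]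
        exact xor_comm''.trans (t.trans (not_congr xor_comm''))
  have ILD' : Interlinked G' d c ↔ ¬ Interlinked G d c := by
    unfold Interlinked
    cases b₁
    · simp only [Bool.not_false] at ed0 ed1 hz
      rw [ed0, ed1, hq0, hz]
      have t := toggle_a' hq hyp hyq hzp hzq hyz
      cases b₀
      · simp only [Bool.not_false] at ec0 ec1 hy
        rw [ec0, ec1, hp0, hy]
        exact t
      · simp only [Bool.not_true] at ec0 ec1 hy
        rw [ec0, ec1, hp0, hy]
        exact xor_comm''.trans (t.trans (not_congr xor_comm''))
    · simp only [Bool.not_true] at ed0 ed1 hz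
      rw [ed0, ed1, hq0, hz]
      have t := toggle_b' hq hyp hyq hzp hzq hyz
      cases b₀
      · simp only [Bool.not_false] at ec0 ec1 hy
        rw [ec0, ec1, hp0, hy]
        exact t
      · simp only [Bool.not_true] at ec0 ec1 hy
        rw [ec0, ec1, hp0, hy]
        exact xor_comm''.trans (t.trans (not_congr xor_comm''))
  -- parities
  have OA : ∀ e : Fin n, e ≠ c → e ≠ d → (OddChord G' e ↔ OddChord G e) := by
    intro e h1 h2
    unfold OddChord
    have hfe : (Finset.univ.filter fun f => f ≠ e ∧ Interlinked G' e f)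
        = Finset.univ.filter fun f => f ≠ e ∧ Interlinked G e f := by
      apply Finset.filter_congr
      intro f _
      by_cases hf1 : f = c
      · subst hf1; exact and_congr_right fun _ => ILB e h1 h2
      · by_cases hf2 : f = d
        · subst hf2; exact and_congr_right fun _ => ILB' e h1 h2
        · exact and_congr_right fun _ => ILA e f h1 h2 hf1 hf2
    rw [hfe]
  have OC : OddChord G' c ↔ ¬ OddChord G c := by
    unfold OddChord
    apply parity_flip d
    · constructor
      · rintro ⟨-, hi⟩ hcon; exact (ILD.mp hi) hcon.2
      · intro hnot
        refine ⟨Ne.symm hcd, ILD.mpr fun hi => hnot ⟨Ne.symm hcd, hi⟩⟩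
    · intro f hf
      by_cases hfc : f = c
      · subst hfc; simp
      · exact and_congr_right fun _ => ILC f hfc hf
  have OD : OddChord G' d ↔ ¬ OddChord G d := by
    unfold OddChord
    apply parity_flip c
    · constructor
      · rintro ⟨-, hi⟩ hcon; exact (ILD'.mp hi) hcon.2
      · intro hnot
        refine ⟨hcd, ILD'.mpr fun hi => hnot ⟨hcd, hi⟩⟩
    · intro f hf
      by_cases hfd : f = d
      · subst hfd; simp
      · exact and_congr_right fun _ => ILC' f hf hfd
  -- summation
  have hsum : ∀ H : GaussDiagram n,
      oddWrithe H = ∑ e : Fin n, if OddChord H e then H.sign e else 0 := by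
    intro H; unfold oddWrithe; rw [Finset.sum_filter]
  have key : ∀ e : Fin n, (if OddChord G' e then G'.sign e else 0)
      = (if OddChord G e then G.sign e else 0)
        + ((if e = c then -G.sign c else 0) + (if e = d then -G.sign d else 0)) := by
    intro e
    have hsgn : G'.sign e = if e = c ∨ e = d then -G.sign e else G.sign e := by rw [hs]
    by_cases h1 : e = c
    · subst h1
      rw [if_pos (Or.inl rfl)] at hsgn
      rw [if_pos rfl, if_neg hcd]
      by_cases ho : OddChord G e
      · rw [if_pos ho, if_neg (fun hh => (OC.mp hh) ho)]; ring
      · rw [if_pos (OC.mpr ho), if_neg ho, hsgn]; ring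
    · by_cases h2 : e = d
      · subst h2
        rw [if_pos (Or.inr rfl)] at hsgn
        rw [if_pos rfl, if_neg h1]
        by_cases ho : OddChord G e
        · rw [if_pos ho, if_neg (fun hh => (OD.mp hh) ho)]; ring
        · rw [if_pos (OD.mpr ho), if_neg ho, hsgn]; ring
      · rw [if_neg (by tauto : ¬ (e = c ∨ e = d))] at hsgn
        rw [if_neg h1, if_neg h2, add_zero, add_zero, hsgn]
        by_cases ho : OddChord G e
        · rw [if_pos ho, if_pos ((OA e h1 h2).mpr ho)]
        · rw [if_neg ho, if_neg (fun hh => ho ((OA e h1 h2).mp hh))]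
  rw [hsum G', hsum G,
    Finset.sum_congr rfl (fun e _ => key e), Finset.sum_add_distrib, Finset.sum_add_distrib,
    Finset.sum_ite_eq' Finset.univ c (fun _ => -G.sign c),
    Finset.sum_ite_eq' Finset.univ d (fun _ => -G.sign d)]
  simp only [Finset.mem_univ, if_pos]
  ring
end

section
/- Let G be a combinatorial Gauss diagram and let G' be obtained from G by a single arc-shift move. Then J(G') − J(G) ∈ {−2, 0, 2}, i.e., either J(G') = J(G) or J(G') = J(G) ± 2. -/
open scoped Classical

section ArithAux
variable {m : ℕ}

lemma subval (a x : Fin m) :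
    (x - a).val = if a.val ≤ x.val then x.val - a.val else x.val + m - a.val := by
  have hA := a.isLt
  have hX := x.isLt
  rw [Fin.sub_def]
  simp only []
  split_ifs with h
  · have e : (m - a.val) + x.val = (x.val - a.val) + m := by omega
    rw [e, Nat.add_mod_right, Nat.mod_eq_of_lt (by omega)]
  · rw [Nat.mod_eq_of_lt (by omega)]; omega

lemma nextPos_spec (p : Fin m) :
    (p.val + 1 = m ∧ (nextPos p).val = 0) ∨ (p.val + 1 < m ∧ (nextPos p).val = p.val + 1) := by
  have hp := p.isLt
  by_cases h : p.val + 1 = m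
  · left; refine ⟨h, ?_⟩; simp [nextPos, h]
  · right; refine ⟨by omega, ?_⟩
    show (p.val + 1) % m = p.val + 1
    exact Nat.mod_eq_of_lt (by omega)

lemma vne {a b : Fin m} (h : a ≠ b) : a.val ≠ b.val :=
  fun hh => h (Fin.ext hh)

lemma inside_shift_a (p b x : Fin m)
    (hb : b ≠ p ∧ b ≠ nextPos p) (hx : x ≠ p ∧ x ≠ nextPos p) (hbx : b ≠ x) :
    Inside (nextPos p) b x ↔ Inside p b x := by
  have hq := nextPos_spec p
  have h1 := vne hb.1; have h2 := vne hb.2; have h3 := vne hx.1; have h4 := vne hx.2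
  have h5 := vne hbx
  have := b.isLt; have := x.isLt; have := p.isLt; have := (nextPos p).isLt
  simp only [Inside, subval]
  split_ifs <;> omega

lemma inside_shift_b (p a x : Fin m)
    (ha : a ≠ p ∧ a ≠ nextPos p) (hx : x ≠ p ∧ x ≠ nextPos p) (hax : a ≠ x) :
    Inside a (nextPos p) x ↔ Inside a p x := by
  have hq := nextPos_spec p
  have h1 := vne ha.1; have h2 := vne ha.2; have h3 := vne hx.1; have h4 := vne hx.2
  have h5 := vne hax
  have := a.isLt; have := x.isLt; have := p.isLt; have := (nextPos p).isLt
  simp only [Inside, subval]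
  split_ifs <;> omega

lemma inside_shift_x (p a b : Fin m)
    (ha : a ≠ p ∧ a ≠ nextPos p) (hb : b ≠ p ∧ b ≠ nextPos p) (hab : a ≠ b) :
    Inside a b (nextPos p) ↔ Inside a b p := by
  have hq := nextPos_spec p
  have h1 := vne ha.1; have h2 := vne ha.2; have h3 := vne hb.1; have h4 := vne hb.2
  have h5 := vne hab
  have := a.isLt; have := b.isLt; have := p.isLt; have := (nextPos p).isLt
  simp only [Inside, subval]
  split_ifs <;> omega

lemma inside_true (a b : Fin m) (h1 : b ≠ a) (h2 : b ≠ nextPos a) :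
    Inside a b (nextPos a) := by
  have hq := nextPos_spec a
  have h1' := vne h1; have h2' := vne h2
  have := a.isLt; have := b.isLt; have := (nextPos a).isLt
  simp only [Inside, subval]
  split_ifs <;> omega

lemma inside_false (a b : Fin m) (h1 : b ≠ a) :
    ¬ Inside (nextPos a) b a := by
  have hq := nextPos_spec a
  have h1' := vne h1
  have := a.isLt; have := b.isLt; have := (nextPos a).isLt
  simp only [Inside, subval]
  split_ifs <;> omega

lemma inside_true2 (a b : Fin m) (h1 : a ≠ b) (h2 : a ≠ nextPos b) :
    Inside a (nextPos b) b := by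
  have hq := nextPos_spec b
  have h1' := vne h1; have h2' := vne h2
  have := a.isLt; have := b.isLt; have := (nextPos b).isLt
  simp only [Inside, subval]
  split_ifs <;> omega

lemma inside_false2 (a b : Fin m) (h1 : a ≠ b) (h2 : a ≠ nextPos b) :
    ¬ Inside a b (nextPos b) := by
  have hq := nextPos_spec b
  have h1' := vne h1; have h2' := vne h2
  have := a.isLt; have := b.isLt; have := (nextPos b).isLt
  simp only [Inside, subval]
  split_ifs <;> omega

end ArithAux

section Shapes
variable {m : ℕ}

lemma toggle_shape1 (a b x y : Fin m)
    (hab : a ≠ b) (hxy : x ≠ y) (hax : a ≠ x) (hay : a ≠ y) (hbx : b ≠ x) (hby : b ≠ y)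
    (h : x = nextPos a ∨ a = nextPos x) :
    (Xor' (Inside x b a) (Inside x b y) ↔ ¬ Xor' (Inside a b x) (Inside a b y)) := by
  rcases h with h | h
  · subst h
    have t1 : Inside a b (nextPos a) := inside_true a b hab.symm hbx
    have f1 : ¬ Inside (nextPos a) b a := inside_false a b hab.symm
    have s : Inside (nextPos a) b y ↔ Inside a b y :=
      inside_shift_a a b y ⟨hab.symm, hbx⟩ ⟨hay.symm, hxy.symm⟩ hby
    unfold Xor' Xor; tauto
  · subst h
    have t1 : Inside x b (nextPos x) := inside_true x b hbx hab.symm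
    have f1 : ¬ Inside (nextPos x) b x := inside_false x b hbx
    have s : Inside (nextPos x) b y ↔ Inside x b y :=
      inside_shift_a x b y ⟨hbx, hab.symm⟩ ⟨hxy.symm, hay.symm⟩ hby
    unfold Xor' Xor; tauto

lemma toggle_shape2 (a b x y : Fin m)
    (hab : a ≠ b) (hxy : x ≠ y) (hax : a ≠ x) (hay : a ≠ y) (hbx : b ≠ x) (hby : b ≠ y)
    (h : y = nextPos a ∨ a = nextPos y) :
    (Xor' (Inside y b x) (Inside y b a) ↔ ¬ Xor' (Inside a b x) (Inside a b y)) := by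
  rcases h with h | h
  · subst h
    have t1 : Inside a b (nextPos a) := inside_true a b hab.symm hby
    have f1 : ¬ Inside (nextPos a) b a := inside_false a b hab.symm
    have s : Inside (nextPos a) b x ↔ Inside a b x :=
      inside_shift_a a b x ⟨hab.symm, hby⟩ ⟨hax.symm, hxy⟩ hbx
    unfold Xor' Xor; tauto
  · subst h
    have t1 : Inside y b (nextPos y) := inside_true y b hby hab.symm
    have f1 : ¬ Inside (nextPos y) b y := inside_false y b hby
    have s : Inside (nextPos y) b x ↔ Inside y b x :=
      inside_shift_a y b x ⟨hby, hab.symm⟩ ⟨hxy, hax.symm⟩ hbx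
    unfold Xor' Xor; tauto

lemma toggle_shape3 (a b x y : Fin m)
    (hab : a ≠ b) (hxy : x ≠ y) (hax : a ≠ x) (hay : a ≠ y) (hbx : b ≠ x) (hby : b ≠ y)
    (h : x = nextPos b ∨ b = nextPos x) :
    (Xor' (Inside a x b) (Inside a x y) ↔ ¬ Xor' (Inside a b x) (Inside a b y)) := by
  rcases h with h | h
  · subst h
    have t1 : Inside a (nextPos b) b := inside_true2 a b hab hax
    have f1 : ¬ Inside a b (nextPos b) := inside_false2 a b hab hax
    have s : Inside a (nextPos b) y ↔ Inside a b y :=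
      inside_shift_b b a y ⟨hab, hax⟩ ⟨hby.symm, hxy.symm⟩ hay
    unfold Xor' Xor; tauto
  · subst h
    have t1 : Inside a (nextPos x) x := inside_true2 a x hax hab
    have f1 : ¬ Inside a x (nextPos x) := inside_false2 a x hax hab
    have s : Inside a (nextPos x) y ↔ Inside a x y :=
      inside_shift_b x a y ⟨hax, hab⟩ ⟨hxy.symm, hby.symm⟩ hay
    unfold Xor' Xor; tauto

lemma toggle_shape4 (a b x y : Fin m)
    (hab : a ≠ b) (hxy : x ≠ y) (hax : a ≠ x) (hay : a ≠ y) (hbx : b ≠ x) (hby : b ≠ y)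
    (h : y = nextPos b ∨ b = nextPos y) :
    (Xor' (Inside a y x) (Inside a y b) ↔ ¬ Xor' (Inside a b x) (Inside a b y)) := by
  rcases h with h | h
  · subst h
    have t1 : Inside a (nextPos b) b := inside_true2 a b hab hay
    have f1 : ¬ Inside a b (nextPos b) := inside_false2 a b hab hay
    have s : Inside a (nextPos b) x ↔ Inside a b x :=
      inside_shift_b b a x ⟨hab, hay⟩ ⟨hbx.symm, hxy⟩ hax
    unfold Xor' Xor; tauto
  · subst h
    have t1 : Inside a (nextPos y) y := inside_true2 a y hay hab
    have f1 : ¬ Inside a y (nextPos y) := inside_false2 a y hay hab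
    have s : Inside a (nextPos y) x ↔ Inside a y x :=
      inside_shift_b y a x ⟨hay, hab⟩ ⟨hxy, hbx.symm⟩ hax
    unfold Xor' Xor; tauto

end Shapes

section SwapAux
variable {m : ℕ}

lemma inside_swap (p a b x : Fin m)
    (hab : a ≠ b) (hax : a ≠ x) (hbx : b ≠ x)
    (h : (b ≠ p ∧ b ≠ nextPos p ∧ x ≠ p ∧ x ≠ nextPos p) ∨
         (a ≠ p ∧ a ≠ nextPos p ∧ x ≠ p ∧ x ≠ nextPos p) ∨
         (a ≠ p ∧ a ≠ nextPos p ∧ b ≠ p ∧ b ≠ nextPos p)) :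
    Inside (Equiv.swap p (nextPos p) a) (Equiv.swap p (nextPos p) b)
      (Equiv.swap p (nextPos p) x) ↔ Inside a b x := by
  rcases h with ⟨h1, h2, h3, h4⟩ | ⟨h1, h2, h3, h4⟩ | ⟨h1, h2, h3, h4⟩
  · rw [Equiv.swap_apply_of_ne_of_ne h1 h2, Equiv.swap_apply_of_ne_of_ne h3 h4]
    by_cases hp : a = p
    · rw [hp, Equiv.swap_apply_left]
      exact inside_shift_a p b x ⟨h1, h2⟩ ⟨h3, h4⟩ hbx
    · by_cases hq : a = nextPos p
      · rw [hq, Equiv.swap_apply_right]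
        exact (inside_shift_a p b x ⟨h1, h2⟩ ⟨h3, h4⟩ hbx).symm
      · rw [Equiv.swap_apply_of_ne_of_ne hp hq]
  · rw [Equiv.swap_apply_of_ne_of_ne h1 h2, Equiv.swap_apply_of_ne_of_ne h3 h4]
    by_cases hp : b = p
    · rw [hp, Equiv.swap_apply_left]
      exact inside_shift_b p a x ⟨h1, h2⟩ ⟨h3, h4⟩ hax
    · by_cases hq : b = nextPos p
      · rw [hq, Equiv.swap_apply_right]
        exact (inside_shift_b p a x ⟨h1, h2⟩ ⟨h3, h4⟩ hax).symm
      · rw [Equiv.swap_apply_of_ne_of_ne hp hq]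
  · rw [Equiv.swap_apply_of_ne_of_ne h1 h2, Equiv.swap_apply_of_ne_of_ne h3 h4]
    by_cases hp : x = p
    · rw [hp, Equiv.swap_apply_left]
      exact inside_shift_x p a b ⟨h1, h2⟩ ⟨h3, h4⟩ hab
    · by_cases hq : x = nextPos p
      · rw [hq, Equiv.swap_apply_right]
        exact (inside_shift_x p a b ⟨h1, h2⟩ ⟨h3, h4⟩ hab).symm
      · rw [Equiv.swap_apply_of_ne_of_ne hp hq]

lemma inside_swap_toggle (p a b x y : Fin m)
    (hab : a ≠ b) (hxy : x ≠ y) (hax : a ≠ x) (hay : a ≠ y) (hbx : b ≠ x) (hby : b ≠ y)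
    (h1 : a = p ∨ a = nextPos p ∨ b = p ∨ b = nextPos p)
    (h2 : x = p ∨ x = nextPos p ∨ y = p ∨ y = nextPos p) :
    (Xor' (Inside (Equiv.swap p (nextPos p) a) (Equiv.swap p (nextPos p) b)
        (Equiv.swap p (nextPos p) x))
      (Inside (Equiv.swap p (nextPos p) a) (Equiv.swap p (nextPos p) b)
        (Equiv.swap p (nextPos p) y)) ↔
      ¬ Xor' (Inside a b x) (Inside a b y)) := by
  rcases h1 with h1 | h1 | h1 | h1 <;> rcases h2 with h2 | h2 | h2 | h2
  -- a = p cases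
  · exact absurd (h1.trans h2.symm) hax
  · have ea : Equiv.swap p (nextPos p) a = x := by
      rw [h1, h2]; exact Equiv.swap_apply_left _ _
    have ex : Equiv.swap p (nextPos p) x = a := by
      rw [h1, h2]; exact Equiv.swap_apply_right _ _
    have eb : Equiv.swap p (nextPos p) b = b :=
      Equiv.swap_apply_of_ne_of_ne (by rw [← h1]; exact hab.symm) (by rw [← h2]; exact hbx)
    have ey : Equiv.swap p (nextPos p) y = y :=
      Equiv.swap_apply_of_ne_of_ne (by rw [← h1]; exact hay.symm) (by rw [← h2]; exact hxy.symm)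
    rw [ea, eb, ex, ey]
    exact toggle_shape1 a b x y hab hxy hax hay hbx hby (Or.inl (by rw [h2, h1]))
  · exact absurd (h1.trans h2.symm) hay
  · have ea : Equiv.swap p (nextPos p) a = y := by
      rw [h1, h2]; exact Equiv.swap_apply_left _ _
    have ey : Equiv.swap p (nextPos p) y = a := by
      rw [h1, h2]; exact Equiv.swap_apply_right _ _
    have eb : Equiv.swap p (nextPos p) b = b :=
      Equiv.swap_apply_of_ne_of_ne (by rw [← h1]; exact hab.symm) (by rw [← h2]; exact hby)
    have ex : Equiv.swap p (nextPos p) x = x :=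
      Equiv.swap_apply_of_ne_of_ne (by rw [← h1]; exact hax.symm) (by rw [← h2]; exact hxy)
    rw [ea, eb, ex, ey]
    exact toggle_shape2 a b x y hab hxy hax hay hbx hby (Or.inl (by rw [h2, h1]))
  -- a = nextPos p cases
  · have ea : Equiv.swap p (nextPos p) a = x := by
      rw [h1, h2]; exact Equiv.swap_apply_right _ _
    have ex : Equiv.swap p (nextPos p) x = a := by
      rw [h1, h2]; exact Equiv.swap_apply_left _ _
    have eb : Equiv.swap p (nextPos p) b = b :=
      Equiv.swap_apply_of_ne_of_ne (by rw [← h2]; exact hbx) (by rw [← h1]; exact hab.symm)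
    have ey : Equiv.swap p (nextPos p) y = y :=
      Equiv.swap_apply_of_ne_of_ne (by rw [← h2]; exact hxy.symm) (by rw [← h1]; exact hay.symm)
    rw [ea, eb, ex, ey]
    exact toggle_shape1 a b x y hab hxy hax hay hbx hby (Or.inr (by rw [h1, h2]))
  · exact absurd (h1.trans h2.symm) hax
  · have ea : Equiv.swap p (nextPos p) a = y := by
      rw [h1, h2]; exact Equiv.swap_apply_right _ _
    have ey : Equiv.swap p (nextPos p) y = a := by
      rw [h1, h2]; exact Equiv.swap_apply_left _ _
    have eb : Equiv.swap p (nextPos p) b = b :=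
      Equiv.swap_apply_of_ne_of_ne (by rw [← h2]; exact hby) (by rw [← h1]; exact hab.symm)
    have ex : Equiv.swap p (nextPos p) x = x :=
      Equiv.swap_apply_of_ne_of_ne (by rw [← h2]; exact hxy) (by rw [← h1]; exact hax.symm)
    rw [ea, eb, ex, ey]
    exact toggle_shape2 a b x y hab hxy hax hay hbx hby (Or.inr (by rw [h1, h2]))
  · exact absurd (h1.trans h2.symm) hay
  -- b = p cases
  · exact absurd (h1.trans h2.symm) hbx
  · have eb : Equiv.swap p (nextPos p) b = x := by
      rw [h1, h2]; exact Equiv.swap_apply_left _ _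
    have ex : Equiv.swap p (nextPos p) x = b := by
      rw [h1, h2]; exact Equiv.swap_apply_right _ _
    have ea : Equiv.swap p (nextPos p) a = a :=
      Equiv.swap_apply_of_ne_of_ne (by rw [← h1]; exact hab) (by rw [← h2]; exact hax)
    have ey : Equiv.swap p (nextPos p) y = y :=
      Equiv.swap_apply_of_ne_of_ne (by rw [← h1]; exact hby.symm) (by rw [← h2]; exact hxy.symm)
    rw [ea, eb, ex, ey]
    exact toggle_shape3 a b x y hab hxy hax hay hbx hby (Or.inl (by rw [h2, h1]))
  · exact absurd (h1.trans h2.symm) hby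
  · have eb : Equiv.swap p (nextPos p) b = y := by
      rw [h1, h2]; exact Equiv.swap_apply_left _ _
    have ey : Equiv.swap p (nextPos p) y = b := by
      rw [h1, h2]; exact Equiv.swap_apply_right _ _
    have ea : Equiv.swap p (nextPos p) a = a :=
      Equiv.swap_apply_of_ne_of_ne (by rw [← h1]; exact hab) (by rw [← h2]; exact hay)
    have ex : Equiv.swap p (nextPos p) x = x :=
      Equiv.swap_apply_of_ne_of_ne (by rw [← h1]; exact hbx.symm) (by rw [← h2]; exact hxy)
    rw [ea, eb, ex, ey]
    exact toggle_shape4 a b x y hab hxy hax hay hbx hby (Or.inl (by rw [h2, h1]))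
  -- b = nextPos p cases
  · have eb : Equiv.swap p (nextPos p) b = x := by
      rw [h1, h2]; exact Equiv.swap_apply_right _ _
    have ex : Equiv.swap p (nextPos p) x = b := by
      rw [h1, h2]; exact Equiv.swap_apply_left _ _
    have ea : Equiv.swap p (nextPos p) a = a :=
      Equiv.swap_apply_of_ne_of_ne (by rw [← h2]; exact hax) (by rw [← h1]; exact hab)
    have ey : Equiv.swap p (nextPos p) y = y :=
      Equiv.swap_apply_of_ne_of_ne (by rw [← h2]; exact hxy.symm) (by rw [← h1]; exact hby.symm)
    rw [ea, eb, ex, ey]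
    exact toggle_shape3 a b x y hab hxy hax hay hbx hby (Or.inr (by rw [h1, h2]))
  · exact absurd (h1.trans h2.symm) hbx
  · have eb : Equiv.swap p (nextPos p) b = y := by
      rw [h1, h2]; exact Equiv.swap_apply_right _ _
    have ey : Equiv.swap p (nextPos p) y = b := by
      rw [h1, h2]; exact Equiv.swap_apply_left _ _
    have ea : Equiv.swap p (nextPos p) a = a :=
      Equiv.swap_apply_of_ne_of_ne (by rw [← h2]; exact hay) (by rw [← h1]; exact hab)
    have ex : Equiv.swap p (nextPos p) x = x :=
      Equiv.swap_apply_of_ne_of_ne (by rw [← h2]; exact hxy) (by rw [← h1]; exact hbx.symm)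
    rw [ea, eb, ex, ey]
    exact toggle_shape4 a b x y hab hxy hax hay hbx hby (Or.inr (by rw [h1, h2]))
  · exact absurd (h1.trans h2.symm) hby

end SwapAux

section GaussAux
variable {n : ℕ} (G G' : GaussDiagram n) (p : Fin (2 * n)) (c d : Fin n)

lemma interlinked_swap (hcd : c ≠ d)
    (hc : (G.endpoint.symm p).1 = c) (hd : (G.endpoint.symm (nextPos p)).1 = d)
    (hE : G'.endpoint = G.endpoint.trans (Equiv.swap p (nextPos p)))
    (e f : Fin n) (hef : e ≠ f)
    (hno : (f ≠ c ∧ f ≠ d) ∨ (e ≠ c ∧ e ≠ d)) :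
    Interlinked G' e f ↔ Interlinked G e f := by
  have hP : ∀ (g : Fin n) (t : Bool), g ≠ c → G.endpoint (g, t) ≠ p := by
    intro g t hg he
    exact hg (by rw [← hc, ← he, Equiv.symm_apply_apply])
  have hQ : ∀ (g : Fin n) (t : Bool), g ≠ d → G.endpoint (g, t) ≠ nextPos p := by
    intro g t hg he
    exact hg (by rw [← hd, ← he, Equiv.symm_apply_apply])
  have hinj : ∀ (u v : Fin n × Bool), u ≠ v → G.endpoint u ≠ G.endpoint v :=
    fun u v h hh => h (G.endpoint.injective hh)
  have hone : ∀ g : Fin n,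
      (G.endpoint (g, false) ≠ p ∧ G.endpoint (g, false) ≠ nextPos p) ∨
      (G.endpoint (g, true) ≠ p ∧ G.endpoint (g, true) ≠ nextPos p) := by
    intro g
    by_cases hf : G.endpoint (g, false) = p
    · right
      constructor
      · intro ht
        have := G.endpoint.injective (ht.trans hf.symm)
        simp at this
      · intro ht
        have e1 : g = c := by rw [← hc, ← hf, Equiv.symm_apply_apply]
        have e2 : g = d := by rw [← hd, ← ht, Equiv.symm_apply_apply]
        exact hcd (e1.symm.trans e2)
    · by_cases hf2 : G.endpoint (g, false) = nextPos p
      · right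
        constructor
        · intro ht
          have e1 : g = c := by rw [← hc, ← ht, Equiv.symm_apply_apply]
          have e2 : g = d := by rw [← hd, ← hf2, Equiv.symm_apply_apply]
          exact hcd (e1.symm.trans e2)
        · intro ht
          have := G.endpoint.injective (ht.trans hf2.symm)
          simp at this
      · left; exact ⟨hf, hf2⟩
  unfold Interlinked
  rw [hE]
  simp only [Equiv.trans_apply]
  have key : ∀ t : Bool,
      (Inside (Equiv.swap p (nextPos p) (G.endpoint (e, false)))
        (Equiv.swap p (nextPos p) (G.endpoint (e, true)))
        (Equiv.swap p (nextPos p) (G.endpoint (f, t))) ↔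
      Inside (G.endpoint (e, false)) (G.endpoint (e, true)) (G.endpoint (f, t))) := by
    intro t
    apply inside_swap p _ _ _
      (hinj _ _ (by simp)) (hinj _ _ (by simp [hef])) (hinj _ _ (by simp [hef]))
    rcases hno with ⟨hf1, hf2⟩ | ⟨he1, he2⟩
    · rcases hone e with he | he
      · exact Or.inr (Or.inl ⟨he.1, he.2, hP f t hf1, hQ f t hf2⟩)
      · exact Or.inl ⟨he.1, he.2, hP f t hf1, hQ f t hf2⟩
    · exact Or.inr (Or.inr ⟨hP e false he1, hQ e false he2, hP e true he1, hQ e true he2⟩)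
  rw [key false, key true]

lemma interlinked_toggle (hcd : c ≠ d)
    (hc : (G.endpoint.symm p).1 = c) (hd : (G.endpoint.symm (nextPos p)).1 = d)
    (hE : G'.endpoint = G.endpoint.trans (Equiv.swap p (nextPos p)))
    (e f : Fin n) (hef : (e = c ∧ f = d) ∨ (e = d ∧ f = c)) :
    Interlinked G' e f ↔ ¬ Interlinked G e f := by
  have hef' : e ≠ f := by
    rcases hef with ⟨rfl, rfl⟩ | ⟨rfl, rfl⟩
    · exact hcd
    · exact hcd.symm
  have hpe : G.endpoint (c, (G.endpoint.symm p).2) = p := by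
    have h : G.endpoint.symm p = (c, (G.endpoint.symm p).2) := Prod.ext hc rfl
    rw [← h, Equiv.apply_symm_apply]
  have hqe : G.endpoint (d, (G.endpoint.symm (nextPos p)).2) = nextPos p := by
    have h : G.endpoint.symm (nextPos p) = (d, (G.endpoint.symm (nextPos p)).2) :=
      Prod.ext hd rfl
    rw [← h, Equiv.apply_symm_apply]
  have hinj : ∀ (u v : Fin n × Bool), u ≠ v → G.endpoint u ≠ G.endpoint v :=
    fun u v h hh => h (G.endpoint.injective hh)
  have hpos : ∀ g : Fin n, g = c ∨ g = d →
      (G.endpoint (g, false) = p ∨ G.endpoint (g, false) = nextPos p ∨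
        G.endpoint (g, true) = p ∨ G.endpoint (g, true) = nextPos p) := by
    intro g hg
    rcases hg with rfl | rfl
    · rcases hbc : (G.endpoint.symm p).2 with _ | _
      · rw [hbc] at hpe
        exact Or.inl hpe
      · rw [hbc] at hpe
        exact Or.inr (Or.inr (Or.inl hpe))
    · rcases hbd : (G.endpoint.symm (nextPos p)).2 with _ | _
      · rw [hbd] at hqe
        exact Or.inr (Or.inl hqe)
      · rw [hbd] at hqe
        exact Or.inr (Or.inr (Or.inr hqe))
  unfold Interlinked
  rw [hE]
  simp only [Equiv.trans_apply]
  apply inside_swap_toggle p _ _ _ _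
    (hinj _ _ (by simp)) (hinj _ _ (by simp)) (hinj _ _ (by simp [hef']))
    (hinj _ _ (by simp [hef'])) (hinj _ _ (by simp [hef'])) (hinj _ _ (by simp [hef']))
  · rcases hef with ⟨rfl, -⟩ | ⟨rfl, -⟩
    · exact hpos _ (Or.inl rfl)
    · exact hpos _ (Or.inr rfl)
  · rcases hef with ⟨-, rfl⟩ | ⟨-, rfl⟩
    · exact hpos _ (Or.inr rfl)
    · exact hpos _ (Or.inl rfl)

end GaussAux

/-- a single arc-shift move changes the odd writhe by `-2`, `0`, or `2`. -/
theorem arcShift_oddWrithe_diff {n : ℕ} (hn : 1 ≤ n) (G G' : GaussDiagram n)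
    (p : Fin (2 * n)) (c d : Fin n) (h : ArcShift G G' p c d) :
    oddWrithe G' - oddWrithe G ∈ ({-2, 0, 2} : Set ℤ) := by
  classical
  obtain ⟨hcd, hc, hd, hE, hs⟩ := h
  have hsame : ∀ e, e ≠ c → e ≠ d → (OddChord G' e ↔ OddChord G e) := by
    intro e he1 he2
    unfold OddChord
    have hfil : (Finset.univ.filter fun f => f ≠ e ∧ Interlinked G' e f)
        = Finset.univ.filter fun f => f ≠ e ∧ Interlinked G e f := by
      apply Finset.filter_congr
      intro f _
      exact and_congr_right fun hfe' =>
        interlinked_swap G G' p c d hcd hc hd hE e f (Ne.symm hfe') (Or.inr ⟨he1, he2⟩)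
    rw [hfil]
  have hflipOdd : ∀ e f, ((e = c ∧ f = d) ∨ (e = d ∧ f = c)) →
      (OddChord G' e ↔ ¬ OddChord G e) := by
    intro e f hef
    have hef' : e ≠ f := by
      rcases hef with ⟨rfl, rfl⟩ | ⟨rfl, rfl⟩
      · exact hcd
      · exact hcd.symm
    have hfe : f ≠ e := Ne.symm hef'
    unfold OddChord
    set S := Finset.univ.filter fun g => g ≠ e ∧ Interlinked G e g with hS
    set S' := Finset.univ.filter fun g => g ≠ e ∧ Interlinked G' e g with hS'
    have hmem : ∀ g, g ≠ f → (g ∈ S' ↔ g ∈ S) := by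
      intro g hg
      rw [hS, hS']
      simp only [Finset.mem_filter, Finset.mem_univ, true_and]
      refine and_congr_right fun hge => ?_
      apply interlinked_swap G G' p c d hcd hc hd hE e g (Ne.symm hge)
      left
      rcases hef with ⟨rfl, rfl⟩ | ⟨rfl, rfl⟩
      · exact ⟨hge, hg⟩
      · exact ⟨hg, hge⟩
    have hmemf : f ∈ S' ↔ f ∉ S := by
      have ht := interlinked_toggle G G' p c d hcd hc hd hE e f hef
      rw [hS, hS']
      simp only [Finset.mem_filter, Finset.mem_univ, true_and, ne_eq, hfe,
        not_false_iff, true_and]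
      rw [ht]
    by_cases hfS : f ∈ S
    · have hfS' : f ∉ S' := fun hh => (hmemf.mp hh) hfS
      have hE' : S' = S.erase f := by
        ext g
        by_cases hg : g = f
        · subst hg
          simp [hfS', Finset.mem_erase]
        · simp [Finset.mem_erase, hg, hmem g hg]
      rw [hE', Finset.card_erase_of_mem hfS]
      have h1 : 1 ≤ S.card := Finset.card_pos.mpr ⟨f, hfS⟩
      rw [Nat.odd_iff, Nat.odd_iff]
      omega
    · have hfS' : f ∈ S' := hmemf.mpr hfS
      have hE' : S' = insert f S := by
        ext g
        by_cases hg : g = f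
        · subst hg
          simp [hfS', hfS]
        · simp [Finset.mem_insert, hg, hmem g hg]
      rw [hE', Finset.card_insert_of_notMem hfS]
      rw [Nat.odd_iff, Nat.odd_iff]
      omega
  have hsgn_other : ∀ e, e ≠ c → e ≠ d → G'.sign e = G.sign e := by
    intro e h1 h2; rw [hs]; simp [h1, h2]
  have hsgn_c : G'.sign c = -G.sign c := by rw [hs]; simp
  have hsgn_d : G'.sign d = -G.sign d := by rw [hs]; simp
  have key : oddWrithe G' - oddWrithe G = -G.sign c - G.sign d := by
    unfold oddWrithe
    rw [Finset.sum_filter, Finset.sum_filter, ← Finset.sum_sub_distrib]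
    have hzero : ∀ e ∈ Finset.univ, e ∉ ({c, d} : Finset (Fin n)) →
        ((if OddChord G' e then G'.sign e else 0) -
          (if OddChord G e then G.sign e else 0)) = 0 := by
      intro e _ he
      simp only [Finset.mem_insert, Finset.mem_singleton, not_or] at he
      rw [hsgn_other e he.1 he.2]
      by_cases hodd : OddChord G e
      · rw [if_pos hodd, if_pos ((hsame e he.1 he.2).mpr hodd), sub_self]
      · rw [if_neg hodd, if_neg (fun hh => hodd ((hsame e he.1 he.2).mp hh)), sub_self]
    rw [← Finset.sum_subset (Finset.subset_univ ({c, d} : Finset (Fin n))) hzero]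
    rw [Finset.sum_pair hcd]
    have hc' : (if OddChord G' c then G'.sign c else 0) -
        (if OddChord G c then G.sign c else 0) = -G.sign c := by
      by_cases hodd : OddChord G c
      · rw [if_pos hodd, if_neg (fun hh => (hflipOdd c d (Or.inl ⟨rfl, rfl⟩)).mp hh hodd)]
        ring
      · rw [if_neg hodd, if_pos ((hflipOdd c d (Or.inl ⟨rfl, rfl⟩)).mpr hodd), hsgn_c]
        ring
    have hd' : (if OddChord G' d then G'.sign d else 0) -
        (if OddChord G d then G.sign d else 0) = -G.sign d := by
      by_cases hodd : OddChord G d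
      · rw [if_pos hodd, if_neg (fun hh => (hflipOdd d c (Or.inr ⟨rfl, rfl⟩)).mp hh hodd)]
        ring
      · rw [if_neg hodd, if_pos ((hflipOdd d c (Or.inr ⟨rfl, rfl⟩)).mpr hodd), hsgn_d]
        ring
    rw [hc', hd']
    ring
  rw [key]
  rcases G.sign_pm c with h1 | h1 <;> rcases G.sign_pm d with h2 | h2 <;>
    rw [h1, h2] <;> norm_num [Set.mem_insert_iff, Set.mem_singleton_iff]
end

section
/- Every combinatorial Gauss diagram can be transformed into a parallel Gauss diagram (one in which no two chords are interlinked) by a finite sequence of arc-shift moves. -/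
open scoped Classical

section AuxLemmas

variable {n : ℕ}

/-- The chord whose endpoint occupies position `p`. -/
def wrd (G : GaussDiagram n) (p : Fin (2 * n)) : Fin n := (G.endpoint.symm p).1

/-- The set of inversions of the chord word of `G`. -/
noncomputable def invs (G : GaussDiagram n) : Finset (Fin (2 * n) × Fin (2 * n)) :=
  Finset.univ.filter (fun pr => pr.1 < pr.2 ∧ wrd G pr.2 < wrd G pr.1)

lemma pos_of_wrd (G : GaussDiagram n) {q : Fin (2 * n)} {c : Fin n} (h : wrd G q = c) :
    q = G.endpoint (c, false) ∨ q = G.endpoint (c, true) := by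
  have h2 : G.endpoint ((G.endpoint.symm q).1, (G.endpoint.symm q).2) = q := by
    simp
  have h' : (G.endpoint.symm q).1 = c := h
  rw [h'] at h2
  cases hb : (G.endpoint.symm q).2 with
  | false => left; rw [← h2, hb]
  | true => right; rw [← h2, hb]

lemma wrd_endpoint (G : GaussDiagram n) (c : Fin n) (b : Bool) :
    wrd G (G.endpoint (c, b)) = c := by simp [wrd]

lemma sub_val_one {m : ℕ} (hm : 2 ≤ m) (a b : Fin m) (h : b.val = a.val + 1) :
    (b - a).val = 1 := by
  rw [Fin.sub_def]
  show (m - a.val + b.val) % m = 1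
  have : m - a.val + b.val = m + 1 := by omega
  rw [this, Nat.add_mod_left m 1, Nat.mod_eq_of_lt (by omega)]

lemma sub_val_pred {m : ℕ} (hm : 2 ≤ m) (a b : Fin m) (h : b.val = a.val + 1) :
    (a - b).val = m - 1 := by
  rw [Fin.sub_def]
  show (m - b.val + a.val) % m = m - 1
  have : m - b.val + a.val = m - 1 := by omega
  rw [this, Nat.mod_eq_of_lt (by omega)]

lemma parallel_of_no_desc (hn : 1 ≤ n) (G : GaussDiagram n)
    (h : ∀ i : ℕ, ∀ hi : i + 1 < 2 * n, wrd G ⟨i, by omega⟩ ≤ wrd G ⟨i + 1, hi⟩) :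
    Parallel G := by
  haveI : NeZero (2 * n) := ⟨by omega⟩
  have hm : 2 ≤ 2 * n := by omega
  -- monotonicity of the chord word
  have mono : ∀ j : ℕ, ∀ i : ℕ, ∀ hj : j < 2 * n, ∀ hij : i ≤ j,
      wrd G ⟨i, by omega⟩ ≤ wrd G ⟨j, hj⟩ := by
    intro j
    induction j with
    | zero =>
      intro i hj hij
      have : i = 0 := by omega
      subst this; exact le_refl _
    | succ k ih =>
      intro i hj hij
      rcases Nat.lt_or_ge i (k + 1) with h1 | h2
      · exact le_trans (ih i (by omega) (by omega)) (h k hj)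
      · have : i = k + 1 := by omega
        subst this; exact le_refl _
  have mono' : ∀ p q : Fin (2 * n), p.val ≤ q.val → wrd G p ≤ wrd G q := by
    intro p q hpq
    have := mono q.val p.val q.isLt hpq
    simpa using this
  -- each chord's endpoints are adjacent on the line
  have adj : ∀ c : Fin n,
      (G.endpoint (c, true)).val = (G.endpoint (c, false)).val + 1 ∨
      (G.endpoint (c, false)).val = (G.endpoint (c, true)).val + 1 := by
    intro c
    set a := G.endpoint (c, false) with ha
    set b := G.endpoint (c, true) with hb
    have hab : a ≠ b := by
      intro h'
      have := G.endpoint.injective h'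
      simp at this
    have key : ∀ u v : Fin (2 * n), u.val < v.val → wrd G u = c → wrd G v = c →
        v.val = u.val + 1 := by
      intro u v huv hu hv
      by_contra hne
      have h1 : u.val + 1 < 2 * n := by omega
      set q : Fin (2 * n) := ⟨u.val + 1, h1⟩ with hq
      have e1 : wrd G u ≤ wrd G q := mono' u q (Nat.le_succ u.val)
      have e2 : wrd G q ≤ wrd G v := mono' q v huv
      rw [hu] at e1; rw [hv] at e2
      have hqc : wrd G q = c := le_antisymm e2 e1
      have f : ∀ {x y : Fin (2 * n)}, x = y → x.val = y.val :=
        fun h' => congrArg Fin.val h'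
      have A : q.val = a.val ∨ q.val = b.val := (pos_of_wrd G hqc).imp f f
      have B : u.val = a.val ∨ u.val = b.val := (pos_of_wrd G hu).imp f f
      have C : v.val = a.val ∨ v.val = b.val := (pos_of_wrd G hv).imp f f
      have habv : a.val ≠ b.val := fun h' => hab (Fin.ext h')
      have hqval : q.val = u.val + 1 := rfl
      omega
    rcases Nat.lt_trichotomy a.val b.val with h' | h' | h'
    · left; exact key a b h' (wrd_endpoint G c false) (wrd_endpoint G c true)
    · exact absurd (Fin.ext h') hab
    · right; exact key b a h' (wrd_endpoint G c true) (wrd_endpoint G c false)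
  -- conclude parallel
  intro c d hcd hint
  set a := G.endpoint (c, false) with ha
  set b := G.endpoint (c, true) with hb
  rcases adj c with hcase | hcase
  · -- (b - a).val = 1 : nothing strictly inside
    have h1 : (b - a).val = 1 := sub_val_one hm a b hcase
    have hins : ∀ x : Fin (2 * n), ¬ Inside a b x := by
      rintro x ⟨hx1, hx2⟩
      omega
    rcases hint with ⟨h', _⟩ | ⟨h', _⟩ <;> exact hins _ h'
  · -- (b - a).val = 2n - 1 : everything except a, b strictly inside
    have h1 : (b - a).val = 2 * n - 1 := sub_val_pred hm b a hcase
    have hins : ∀ β : Bool, Inside a b (G.endpoint (d, β)) := by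
      intro β
      set x := G.endpoint (d, β) with hx
      have hxa : x ≠ a := by
        intro h'
        have := G.endpoint.injective h'
        exact hcd (congrArg Prod.fst this).symm
      have hxb : x ≠ b := by
        intro h'
        have := G.endpoint.injective h'
        exact hcd (congrArg Prod.fst this).symm
      constructor
      · rcases Nat.eq_zero_or_pos (x - a).val with h' | h'
        · exfalso
          have : x - a = 0 := Fin.ext h'
          exact hxa (sub_eq_zero.mp this)
        · exact h'
      · rw [h1]
        have hlt : (x - a).val < 2 * n := (x - a).isLt
        rcases Nat.lt_or_ge (x - a).val (2 * n - 1) with h' | h'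
        · exact h'
        · exfalso
          have : (x - a).val = 2 * n - 1 := by omega
          have : x - a = b - a := Fin.ext (by rw [this, h1])
          exact hxb (sub_left_inj.mp this)
    rcases hint with ⟨_, h'⟩ | ⟨_, h'⟩
    · exact h' (hins true)
    · exact h' (hins false)

end AuxLemmas

lemma arcShift_step {n : ℕ} (G : GaussDiagram n) (i : ℕ) (hi : i + 1 < 2 * n)
    (hw : wrd G ⟨i + 1, hi⟩ < wrd G ⟨i, by omega⟩) :
    ∃ G' : GaussDiagram n, ArcShiftMove G G' ∧ (invs G').card < (invs G).card := by
  set p : Fin (2 * n) := ⟨i, by omega⟩ with hpdef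
  set q : Fin (2 * n) := ⟨i + 1, hi⟩ with hqdef
  have hpv : p.val = i := rfl
  have hqv : q.val = i + 1 := rfl
  have hnext : nextPos p = q := by
    apply Fin.ext
    show (i + 1) % (2 * n) = i + 1
    exact Nat.mod_eq_of_lt hi
  set c : Fin n := wrd G p with hc
  set d : Fin n := wrd G q with hd
  have hcd : c ≠ d := ne_of_gt hw
  set s : Equiv.Perm (Fin (2 * n)) := Equiv.swap p q with hs
  set G' : GaussDiagram n :=
    ⟨G.endpoint.trans s,
     fun e => if e = c ∨ e = d then -G.sign e else G.sign e,
     by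
       intro e
       rcases G.sign_pm e with h | h <;> by_cases he : (e = c ∨ e = d) <;>
         simp [he, h]⟩ with hG'
  have hwrd' : ∀ x : Fin (2 * n), wrd G' x = wrd G (s x) := by
    intro x
    show ((G.endpoint.trans s).symm x).1 = (G.endpoint.symm (s x)).1
    rw [Equiv.symm_trans_apply, Equiv.symm_swap]
  have hsval : ∀ x : Fin (2 * n),
      (s x).val = if x = p then i + 1 else if x = q then i else x.val := by
    intro x
    rw [hs, Equiv.swap_apply_def]
    split_ifs <;> rfl
  have hpq_mem : (p, q) ∈ invs G := by
    simp only [invs, Finset.mem_filter, Finset.mem_univ, true_and]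
    exact ⟨by simp [Fin.lt_def, hpv, hqv], hw⟩
  refine ⟨G', ⟨p, c, d, hcd, rfl, ?_, ?_, rfl⟩, ?_⟩
  · rw [hnext]; exact hd.symm
  · rw [hnext]
  · -- inversion count strictly decreases
    have hle : (invs G').card ≤ ((invs G).erase (p, q)).card := by
      apply Finset.card_le_card_of_injOn (fun pr => (s pr.1, s pr.2))
      · rintro ⟨x, y⟩ hxy
        simp only [invs, Finset.mem_coe, Finset.mem_filter, Finset.mem_univ, true_and] at hxy
        obtain ⟨hlt, hinv⟩ := hxy
        rw [hwrd', hwrd'] at hinv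
        have hne : ¬(x = p ∧ y = q) := by
          rintro ⟨hx, hy⟩
          rw [hx, hy] at hinv
          have e1 : s p = q := Equiv.swap_apply_left p q
          have e2 : s q = p := Equiv.swap_apply_right p q
          rw [e1, e2] at hinv
          exact absurd hinv (not_lt.mpr (le_of_lt hw))
        rw [Finset.mem_coe, Finset.mem_erase]
        constructor
        · intro h
          have h1 : s x = p := congrArg Prod.fst h
          have h2 : s y = q := congrArg Prod.snd h
          have hx : x = q := by
            have := Equiv.swap_apply_right p q
            exact s.injective (by rw [h1, ← this])
          have hy : y = p := by
            have := Equiv.swap_apply_left p q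
            exact s.injective (by rw [h2, ← this])
          rw [hx, hy] at hlt
          simp [Fin.lt_def, hpv, hqv] at hlt
        · simp only [invs, Finset.mem_filter, Finset.mem_univ, true_and]
          refine ⟨?_, hinv⟩
          -- s x < s y
          have hx1 := hsval x
          have hy1 := hsval y
          have hlt' : x.val < y.val := hlt
          rw [Fin.lt_def, hx1, hy1]
          have hxp : x = p ↔ x.val = i := by rw [Fin.ext_iff, hpv]
          have hxq : x = q ↔ x.val = i + 1 := by rw [Fin.ext_iff, hqv]
          have hyp : y = p ↔ y.val = i := by rw [Fin.ext_iff, hpv]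
          have hyq : y = q ↔ y.val = i + 1 := by rw [Fin.ext_iff, hqv]
          have hneval : ¬(x.val = i ∧ y.val = i + 1) := by
            rintro ⟨h1, h2⟩
            exact hne ⟨hxp.mpr h1, hyq.mpr h2⟩
          split_ifs with h1 h2 h3 h4 h5 h6 h7 h8 <;>
            simp only [hxp, hxq, hyp, hyq] at * <;> omega
      · rintro ⟨x1, y1⟩ _ ⟨x2, y2⟩ _ h
        have h1 : s x1 = s x2 := congrArg Prod.fst h
        have h2 : s y1 = s y2 := congrArg Prod.snd h
        rw [Prod.ext_iff]
        exact ⟨s.injective h1, s.injective h2⟩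
    calc (invs G').card ≤ ((invs G).erase (p, q)).card := hle
      _ < (invs G).card := Finset.card_erase_lt_of_mem hpq_mem

/-- every combinatorial Gauss diagram can be transformed into a parallel
Gauss diagram by a finite sequence of arc-shift moves. -/
theorem exists_parallel_of_arcShift_moves {n : ℕ} (hn : 1 ≤ n) (G : GaussDiagram n) :
    ∃ G' : GaussDiagram n,
      Relation.ReflTransGen (fun H H' => ArcShiftMove H H') G G' ∧ Parallel G' := by
  suffices h : ∀ k : ℕ, ∀ G : GaussDiagram n, (invs G).card = k →
      ∃ G' : GaussDiagram n,
        Relation.ReflTransGen (fun H H' => ArcShiftMove H H') G G' ∧ Parallel G' by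
    exact h _ G rfl
  intro k
  induction k using Nat.strong_induction_on with
  | _ k ih =>
    intro G hG
    by_cases hdesc : ∃ i : ℕ, ∃ hi : i + 1 < 2 * n, wrd G ⟨i + 1, hi⟩ < wrd G ⟨i, by omega⟩
    · obtain ⟨i, hi, hw⟩ := hdesc
      obtain ⟨G', hmove, hcard⟩ := arcShift_step G i hi hw
      obtain ⟨G'', hrt, hpar⟩ := ih (invs G').card (by omega) G' rfl
      exact ⟨G'', Relation.ReflTransGen.head hmove hrt, hpar⟩
    · push_neg at hdesc
      exact ⟨G, Relation.ReflTransGen.refl,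
        parallel_of_no_desc hn G (fun i hi => hdesc i hi)⟩
end

section
/- Let G₀ be the combinatorial Gauss diagram with exactly two chords whose four endpoints alternate around the circle (so the two chords are interlinked) and whose signs are both −1 (the Gauss diagram of the left-hand virtual trefoil). Then J(G₀) = −2, G₀ is not parallel, and a single arc-shift move transforms G₀ into a parallel Gauss diagram; hence the minimum number of arc-shift or sign-flip moves needed to transform G₀ into a parallel Gauss diagram is exactly 1 (the Gauss-diagram form of the statement that the virtual left-hand trefoil has arc shift number 1). -/
open scoped Classical

/- auxiliary -/
def Ilk (e : Fin 2 × Bool ≃ Fin (2*2)) (c d : Fin 2) : Prop :=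
  Xor' (Inside (e (c,false)) (e (c,true)) (e (d,false)))
       (Inside (e (c,false)) (e (c,true)) (e (d,true)))

instance (a b x : Fin (2*2)) : Decidable (Inside a b x) := by unfold Inside; infer_instance
instance (e : Fin 2 × Bool ≃ Fin (2*2)) (c d : Fin 2) : Decidable (Ilk e c d) := by
  unfold Ilk Xor'; infer_instance

set_option maxHeartbeats 1000000 in
lemma ilk_core : ∀ e : Fin 2 × Bool ≃ Fin (2*2), Ilk e 0 1 →
  Ilk e 1 0 ∧ ∃ p : Fin (2*2), (e.symm p).1 ≠ (e.symm (nextPos p)).1 ∧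
    ∀ c d : Fin 2, c ≠ d → ¬ Ilk (e.trans (Equiv.swap p (nextPos p))) c d := by decide

/-- the Gauss diagram `G₀` of the left-hand virtual trefoil (two interlinked
chords, both of sign `-1`) has `J(G₀) = -2`, is not parallel, becomes parallel after a
single arc-shift move, and the minimal number of arc-shift or sign-flip moves needed to
make it parallel is exactly `1`. -/
theorem virtual_trefoil_arcShift_number (G₀ : GaussDiagram 2)
    (hinter : Interlinked G₀ 0 1)
    (hs0 : G₀.sign 0 = -1) (hs1 : G₀.sign 1 = -1) :
    oddWrithe G₀ = -2 ∧ ¬ Parallel G₀ ∧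
      (∃ G' : GaussDiagram 2, ArcShiftMove G₀ G' ∧ Parallel G') ∧
      IsLeast {m : ℕ | ∃ seq : ℕ → GaussDiagram 2, seq 0 = G₀ ∧
        (∀ i < m, Move (seq i) (seq (i + 1))) ∧ Parallel (seq m)} 1 := by
  have hcore := ilk_core G₀.endpoint hinter
  have h10 : Interlinked G₀ 1 0 := hcore.1
  obtain ⟨p, hpd, hpar⟩ := hcore.2
  -- the arc-shifted diagram
  set c : Fin 2 := (G₀.endpoint.symm p).1 with hc
  set d : Fin 2 := (G₀.endpoint.symm (nextPos p)).1 with hd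
  have hsign : ∀ x : Fin 2, (if x = c ∨ x = d then -G₀.sign x else G₀.sign x) = 1 ∨
      (if x = c ∨ x = d then -G₀.sign x else G₀.sign x) = -1 := by
    intro x
    rcases G₀.sign_pm x with h | h <;> by_cases hx : x = c ∨ x = d <;> simp [hx, h]
  refine ⟨?_, ?_, ?_, ?_⟩
  · -- odd writhe
    have ho0 : OddChord G₀ 0 := by
      have : (Finset.univ.filter fun e => e ≠ (0 : Fin 2) ∧ Interlinked G₀ 0 e) = {1} := by
        ext x
        fin_cases x <;> simp [hinter]
      rw [OddChord, this]
      simp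
    have ho1 : OddChord G₀ 1 := by
      have : (Finset.univ.filter fun e => e ≠ (1 : Fin 2) ∧ Interlinked G₀ 1 e) = {0} := by
        ext x
        fin_cases x <;> simp [h10]
      rw [OddChord, this]
      simp
    have : (Finset.univ.filter fun x => OddChord G₀ x) = (Finset.univ : Finset (Fin 2)) := by
      ext x
      fin_cases x <;> simp [ho0, ho1]
    rw [oddWrithe, this, Fin.sum_univ_two, hs0, hs1]
    norm_num
  · intro hP
    exact hP 0 1 (by decide) hinter
  · refine ⟨⟨G₀.endpoint.trans (Equiv.swap p (nextPos p)),
      fun x => if x = c ∨ x = d then -G₀.sign x else G₀.sign x, hsign⟩,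
      ⟨p, c, d, hpd, rfl, rfl, rfl, rfl⟩, ?_⟩
    intro a b hab hI
    exact hpar a b hab hI
  · constructor
    · refine ⟨fun i => if i = 0 then G₀ else
        ⟨G₀.endpoint.trans (Equiv.swap p (nextPos p)),
          fun x => if x = c ∨ x = d then -G₀.sign x else G₀.sign x, hsign⟩, rfl, ?_, ?_⟩
      · intro i hi
        interval_cases i
        exact Or.inl ⟨p, c, d, hpd, rfl, rfl, rfl, rfl⟩
      · simp only [Nat.one_ne_zero, if_false]
        intro a b hab hI
        exact hpar a b hab hI
    · rintro m ⟨seq, h0, _, hpm⟩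
      rcases Nat.eq_zero_or_pos m with rfl | h
      · rw [h0] at hpm
        exact absurd hinter (hpm 0 1 (by decide))
      · exact h
end

section
/- Let G be a combinatorial Gauss diagram with n chords in which three cyclically consecutive positions p, p+1, p+2 (mod 2n) are occupied by endpoints of three pairwise distinct chords. Let G' be the Gauss diagram obtained from G by reversing the order of these three endpoints (i.e., exchanging the endpoints at positions p and p+2) while keeping all signs unchanged. Then G' can be obtained from G by a sequence of exactly three arc-shift moves (the Gauss-diagram form of the statement that a Reidemeister move R₃ is realized by three arc shift moves; each of the three chords has its sign negated twice, so all signs are restored). -/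
open scoped Classical

lemma swap_conj3 {α} [DecidableEq α] {a b c : α} (hab : a ≠ b) (hac : a ≠ c) (hbc : b ≠ c)
    (y : α) : Equiv.swap a c y = Equiv.swap a b (Equiv.swap b c (Equiv.swap a b y)) := by
  rcases eq_or_ne y a with rfl | hya
  · simp [Equiv.swap_apply_of_ne_of_ne, hab, hac, hbc, hab.symm, hac.symm, hbc.symm]
  rcases eq_or_ne y b with rfl | hyb
  · simp [Equiv.swap_apply_of_ne_of_ne, hab, hac, hbc, hab.symm, hac.symm, hbc.symm]
  rcases eq_or_ne y c with rfl | hyc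
  · simp [Equiv.swap_apply_of_ne_of_ne, hab, hac, hbc, hab.symm, hac.symm, hbc.symm]
  · simp [Equiv.swap_apply_of_ne_of_ne, hya, hyb, hyc]

/-- Auxiliary constructor: swap two endpoint positions and negate two chord signs. -/
noncomputable def arcStep {n : ℕ} (G : GaussDiagram n) (p q : Fin (2 * n)) (c d : Fin n) :
    GaussDiagram n where
  endpoint := G.endpoint.trans (Equiv.swap p q)
  sign := fun x => if x = c ∨ x = d then -G.sign x else G.sign x
  sign_pm := fun x => by
    rcases G.sign_pm x with h | h <;> by_cases hx : x = c ∨ x = d <;> simp [hx, h]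

/-- if three cyclically consecutive positions `p`, `p+1`, `p+2` are occupied
by endpoints of three pairwise distinct chords, then the Gauss diagram obtained by
exchanging the endpoints at positions `p` and `p+2` (keeping all signs unchanged) can be
obtained by a sequence of exactly three arc-shift moves. -/
theorem r3_via_three_arcShifts {n : ℕ} (hn : 1 ≤ n) (G G' : GaussDiagram n)
    (p : Fin (2 * n))
    (hcd : (G.endpoint.symm p).1 ≠ (G.endpoint.symm (nextPos p)).1)
    (hce : (G.endpoint.symm p).1 ≠ (G.endpoint.symm (nextPos (nextPos p))).1)
    (hde : (G.endpoint.symm (nextPos p)).1 ≠ (G.endpoint.symm (nextPos (nextPos p))).1)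
    (hE : G'.endpoint = G.endpoint.trans (Equiv.swap p (nextPos (nextPos p))))
    (hsign : G'.sign = G.sign) :
    ∃ G₁ G₂ : GaussDiagram n,
      (∃ p₁ c d, ArcShift G G₁ p₁ c d) ∧
      (∃ p₂ c d, ArcShift G₁ G₂ p₂ c d) ∧
      (∃ p₃ c d, ArcShift G₂ G' p₃ c d) := by
  classical
  let q1 := nextPos p
  let q2 := nextPos q1
  let c := (G.endpoint.symm p).1
  let d := (G.endpoint.symm q1).1
  let e := (G.endpoint.symm q2).1
  have hcd' : c ≠ d := hcd
  have hce' : c ≠ e := hce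
  have hde' : d ≠ e := hde
  have hpq1 : p ≠ q1 := fun h => hcd' (congrArg (fun x => (G.endpoint.symm x).1) h)
  have hpq2 : p ≠ q2 := fun h => hce' (congrArg (fun x => (G.endpoint.symm x).1) h)
  have hq12 : q1 ≠ q2 := fun h => hde' (congrArg (fun x => (G.endpoint.symm x).1) h)
  let G1 := arcStep G p q1 c d
  let G2 := arcStep G1 q1 q2 c e
  have hsymm1 : ∀ x, G1.endpoint.symm x = G.endpoint.symm (Equiv.swap p q1 x) := by
    intro x
    show ((G.endpoint.trans (Equiv.swap p q1)).symm x) = _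
    rw [Equiv.symm_trans_apply, Equiv.symm_swap]
  have hsymm2 : ∀ x, G2.endpoint.symm x = G1.endpoint.symm (Equiv.swap q1 q2 x) := by
    intro x
    show ((G1.endpoint.trans (Equiv.swap q1 q2)).symm x) = _
    rw [Equiv.symm_trans_apply, Equiv.symm_swap]
  refine ⟨G1, G2, ⟨p, c, d, hcd', rfl, rfl, rfl, rfl⟩, ?_, ?_⟩
  · refine ⟨q1, c, e, hce', ?_, ?_, rfl, rfl⟩
    · rw [hsymm1, Equiv.swap_apply_right]
    · show (G1.endpoint.symm q2).1 = e
      rw [hsymm1, Equiv.swap_apply_of_ne_of_ne hpq2.symm hq12.symm]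
  · refine ⟨p, d, e, hde', ?_, ?_, ?_, ?_⟩
    · rw [hsymm2, Equiv.swap_apply_of_ne_of_ne hpq1 hpq2, hsymm1,
        Equiv.swap_apply_left]
    · show (G2.endpoint.symm q1).1 = e
      rw [hsymm2, Equiv.swap_apply_left, hsymm1,
        Equiv.swap_apply_of_ne_of_ne hpq2.symm hq12.symm]
    · rw [hE]
      apply Equiv.ext
      intro x
      show Equiv.swap p q2 (G.endpoint x)
        = Equiv.swap p q1 (Equiv.swap q1 q2 (Equiv.swap p q1 (G.endpoint x)))
      exact swap_conj3 hpq1 hpq2 hq12 _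
    · rw [hsign]
      funext x
      show G.sign x = if x = d ∨ x = e then
          -(if x = c ∨ x = e then -(if x = c ∨ x = d then -G.sign x else G.sign x)
            else (if x = c ∨ x = d then -G.sign x else G.sign x))
        else (if x = c ∨ x = e then -(if x = c ∨ x = d then -G.sign x else G.sign x)
            else (if x = c ∨ x = d then -G.sign x else G.sign x))
      have hdc : d ≠ c := fun h => hcd' h.symm
      have hec : e ≠ c := fun h => hce' h.symm
      have hed : e ≠ d := fun h => hde' h.symm
      rcases eq_or_ne x c with rfl | hxc
      · simp [hcd', hce']
      rcases eq_or_ne x d with rfl | hxd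
      · simp [hdc, hde']
      rcases eq_or_ne x e with rfl | hxe
      · simp [hec, hed]
      · simp [hxc, hxd, hxe]
end
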